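/- arXiv:1906.00527 — 5 statements merged into one kernel-verified Lean document; each statement's English description precedes it below -/
import Mathlib

section
/- Let u ∈ C¹(ℝ) with u' ∈ L²(ℝ), and suppose u has finite limits u(-∞) ∈ ℝ as z → -∞ and u(+∞) ∈ ℝ as z → +∞. Then the function Δu defined by (Δu)(z) = Σ_{k∈ℤ} a_k u(z-k) belongs to L²(ℝ), and ∫_ℝ (Δu)(z)·u'(z) dz = 0. -/
open MeasureTheory Filter Real

/-- The nonlocal operator `(Δu)(z) = ∑_{k ∈ ℤ} a_k u(z - k)`. -/
noncomputable def deltaOp (a : ℤ → ℝ) (u : ℝ → ℝ) (z : ℝ) : ℝ :=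
  ∑' k : ℤ, a k * u (z - (k : ℝ))

/-- Hypothesis (H2) on the coupling coefficients. -/
def CoeffH2 (a : ℤ → ℝ) : Prop :=
  Summable (fun k : ℤ => |a k|) ∧ (∑' k : ℤ, a k) = 0 ∧ a 0 < 0 ∧
    (∀ k : ℤ, a k = a (-k)) ∧ Summable (fun k : ℤ => |a k| * (k : ℝ) ^ 2)

/-- Hypothesis (H1) on the nonlinearity `f`. -/
def NonlinH1 (f : ℝ → ℝ) : Prop :=
  ContDiff ℝ 2 f ∧ f 0 = 0 ∧ f 1 = 0 ∧ deriv f 0 < 0 ∧ deriv f 1 < 0 ∧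
    (∫ s in (0:ℝ)..1, f s) = 0 ∧ ∀ u ∈ Set.Ioo (0:ℝ) 1, (∫ s in (0:ℝ)..u, f s) ≠ 0

/-- `u₀` is a heteroclinic solution of `u'' + f(u) = 0` connecting `0` to `1`. -/
def IsHeteroclinic (f u₀ : ℝ → ℝ) : Prop :=
  ContDiff ℝ 2 u₀ ∧ (∀ z : ℝ, deriv (deriv u₀) z + f (u₀ z) = 0) ∧
    Tendsto u₀ atBot (nhds 0) ∧ Tendsto u₀ atTop (nhds 1)

/-- Membership in `H²(ℝ)` (with everywhere-defined derivatives). -/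
def MemH2R (φ : ℝ → ℝ) : Prop :=
  Differentiable ℝ φ ∧ Differentiable ℝ (deriv φ) ∧
    MemLp φ 2 volume ∧ MemLp (deriv φ) 2 volume ∧ MemLp (deriv (deriv φ)) 2 volume

/-- The `L²(ℝ)` norm. -/
noncomputable def L2norm (φ : ℝ → ℝ) : ℝ := (eLpNorm φ 2 volume).toReal

/-- The `H²(ℝ)` norm. -/
noncomputable def H2norm (φ : ℝ → ℝ) : ℝ :=
  L2norm φ + L2norm (deriv φ) + L2norm (deriv (deriv φ))


open scoped ENNReal NNReal

section Helpers

lemma aux_bdd {u : ℝ → ℝ} {A B : ℝ} (hu : Continuous u)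
    (hA : Tendsto u atBot (nhds A)) (hB : Tendsto u atTop (nhds B)) :
    ∃ M : ℝ, 0 ≤ M ∧ ∀ x, ‖u x‖ ≤ M := by
  obtain ⟨R1, hR1⟩ := (hB.norm.eventually (ge_mem_nhds (lt_add_one ‖B‖))).exists_forall_of_atTop
  obtain ⟨R0, hR0⟩ := (hA.norm.eventually (ge_mem_nhds (lt_add_one ‖A‖))).exists_forall_of_atBot
  obtain ⟨C, hC⟩ := (isCompact_Icc (a := R0) (b := R1)).exists_bound_of_continuousOn
    hu.norm.continuousOn
  refine ⟨max (max (‖A‖+1) (‖B‖+1)) C, le_trans (norm_nonneg (u R0)) ?_, fun x => ?_⟩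
  · rcases le_total R0 R1 with h | h
    · exact le_max_of_le_right (norm_norm (u R0) ▸ hC R0 ⟨le_rfl, h⟩)
    · exact le_max_of_le_left (le_max_of_le_left (hR0 R0 le_rfl))
  rcases le_total x R0 with h | h
  · exact le_max_of_le_left (le_max_of_le_left (hR0 x h))
  rcases le_total x R1 with h' | h'
  · exact le_max_of_le_right ((norm_norm (u x)).symm.trans_le (norm_norm (u x) ▸ hC x ⟨h, h'⟩))
  · exact le_max_of_le_left (le_max_of_le_right (hR1 x h'))

lemma shift_sq (u : ℝ → ℝ) (hu : ContDiff ℝ 1 u) (c : ℝ) (hc : 0 ≤ c) :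
    ∫⁻ z, ((‖u z - u (z - c)‖₊ : ℝ≥0∞)) ^ (2:ℝ) ≤
      (ENNReal.ofReal c) ^ (2:ℝ) * ∫⁻ t, ((‖deriv u t‖₊ : ℝ≥0∞)) ^ (2:ℝ) := by
  have hud : Differentiable ℝ u := hu.differentiable one_ne_zero
  have hcd : Continuous (deriv u) := hu.continuous_deriv le_rfl
  set W : ℝ → ℝ≥0∞ := fun t => ((‖deriv u t‖₊ : ℝ≥0∞)) ^ (2:ℝ) with hWdef
  have hW : Measurable W := (hcd.measurable.nnnorm.coe_nnreal_ennreal).pow_const _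
  set N : ℝ≥0∞ := ∫⁻ t, W t with hNdef
  -- pointwise bound
  have hpt : ∀ z, ((‖u z - u (z - c)‖₊ : ℝ≥0∞)) ^ (2:ℝ) ≤
      (∫⁻ t in Set.Ioc (z - c) z, W t) * ENNReal.ofReal c := by
    intro z
    have h1 : u z - u (z - c) = ∫ t in Set.Ioc (z - c) z, deriv u t := by
      rw [← intervalIntegral.integral_of_le (by linarith : z - c ≤ z),
        intervalIntegral.integral_deriv_eq_sub (fun x _ => hud x)
          (hcd.intervalIntegrable _ _)]
    have h2 : ((‖u z - u (z - c)‖₊ : ℝ≥0∞)) ≤ ∫⁻ t in Set.Ioc (z - c) z, (‖deriv u t‖₊ : ℝ≥0∞) := by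
      rw [h1]; exact enorm_integral_le_lintegral_enorm _
    have hconj : Real.HolderConjugate 2 2 := Real.HolderConjugate.two_two
    have h3 : ∫⁻ t in Set.Ioc (z - c) z, (‖deriv u t‖₊ : ℝ≥0∞) ≤
        (∫⁻ t in Set.Ioc (z - c) z, W t) ^ (1/2 : ℝ) * (ENNReal.ofReal c) ^ (1/2 : ℝ) := by
      have := ENNReal.lintegral_mul_le_Lp_mul_Lq (volume.restrict (Set.Ioc (z - c) z)) hconj
        (hcd.measurable.nnnorm.coe_nnreal_ennreal.aemeasurable) (aemeasurable_const (b := (1:ℝ≥0∞)))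
      have hres : (volume.restrict (Set.Ioc (z - c) z)) Set.univ = ENNReal.ofReal c := by
        rw [Measure.restrict_apply_univ, Real.volume_Ioc]; norm_num
      simp only [Pi.mul_apply, mul_one, ENNReal.one_rpow, lintegral_const, one_mul, hres] at this
      exact this
    calc ((‖u z - u (z - c)‖₊ : ℝ≥0∞)) ^ (2:ℝ) ≤
        ((∫⁻ t in Set.Ioc (z - c) z, W t) ^ (1/2 : ℝ) * (ENNReal.ofReal c) ^ (1/2 : ℝ)) ^ (2:ℝ) :=
          ENNReal.rpow_le_rpow (h2.trans h3) (by norm_num)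
      _ = (∫⁻ t in Set.Ioc (z - c) z, W t) * ENNReal.ofReal c := by
          rw [ENNReal.mul_rpow_of_nonneg _ _ (by norm_num : (0:ℝ) ≤ 2), ← ENNReal.rpow_mul,
            ← ENNReal.rpow_mul]
          norm_num
  -- integral of inner integral
  have hswap : ∫⁻ z, (∫⁻ t in Set.Ioc (z - c) z, W t) = ENNReal.ofReal c * N := by
    have hrw : ∀ z, ∫⁻ t in Set.Ioc (z - c) z, W t
        = ∫⁻ s, (Set.Ioc 0 c).indicator (fun s => W (s + (z - c))) s := by
      intro z
      rw [← lintegral_indicator measurableSet_Ioc _,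
        ← lintegral_add_right_eq_self (fun t => (Set.Ioc (z - c) z).indicator W t) (z - c)]
      congr 1; ext s
      simp only [Set.indicator_apply, Set.mem_Ioc]
      have : (z - c < s + (z - c) ∧ s + (z - c) ≤ z) ↔ (0 < s ∧ s ≤ c) := by
        constructor <;> (rintro ⟨h1, h2⟩; constructor <;> linarith)
      rw [if_congr this rfl rfl]
    calc ∫⁻ z, (∫⁻ t in Set.Ioc (z - c) z, W t)
        = ∫⁻ z, ∫⁻ s, (Set.Ioc 0 c).indicator (fun s => W (s + (z - c))) s := by
          simp_rw [hrw]
      _ = ∫⁻ s, ∫⁻ z, (Set.Ioc 0 c).indicator (fun s => W (s + (z - c))) s := by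
          apply lintegral_lintegral_swap
          have : (Function.uncurry fun z s => (Set.Ioc 0 c).indicator (fun s => W (s + (z - c))) s)
              = fun p : ℝ × ℝ => ({q : ℝ × ℝ | q.2 ∈ Set.Ioc 0 c}.indicator
                  (fun q => W (q.2 + (q.1 - c))) p) := by
            ext ⟨z, s⟩
            simp only [Function.uncurry, Set.indicator_apply, Set.mem_setOf_eq]
          rw [this]
          exact ((hW.comp (by fun_prop)).indicator
            (measurable_snd measurableSet_Ioc)).aemeasurable
      _ = ∫⁻ s, (Set.Ioc 0 c).indicator (fun _ => N) s := by
          congr 1; ext s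
          by_cases hs : s ∈ Set.Ioc 0 c
          · simp only [Set.indicator_of_mem hs]
            calc ∫⁻ z, W (s + (z - c)) = ∫⁻ z, W (z + (s - c)) := by
                  congr 1; ext z; ring_nf
              _ = N := lintegral_add_right_eq_self W (s - c)
          · simp [Set.indicator_of_notMem hs]
      _ = ENNReal.ofReal c * N := by
          rw [lintegral_indicator measurableSet_Ioc _, setLIntegral_const, Real.volume_Ioc]
          rw [mul_comm]; norm_num
  calc ∫⁻ z, ((‖u z - u (z - c)‖₊ : ℝ≥0∞)) ^ (2:ℝ)
      ≤ ∫⁻ z, (∫⁻ t in Set.Ioc (z - c) z, W t) * ENNReal.ofReal c := lintegral_mono hpt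
    _ = (∫⁻ z, (∫⁻ t in Set.Ioc (z - c) z, W t)) * ENNReal.ofReal c := by
        rw [lintegral_mul_const' _ _ (by simp)]
    _ ≤ (ENNReal.ofReal c * N) * ENNReal.ofReal c := by
        exact mul_le_mul_left hswap.le _
    _ = (ENNReal.ofReal c) ^ (2:ℝ) * N := by
        rw [ENNReal.rpow_two]; ring

lemma shift_sq' (u : ℝ → ℝ) (hu : ContDiff ℝ 1 u) (c : ℝ) :
    ∫⁻ z, ((‖u z - u (z - c)‖₊ : ℝ≥0∞)) ^ (2:ℝ) ≤
      (ENNReal.ofReal |c|) ^ (2:ℝ) * ∫⁻ t, ((‖deriv u t‖₊ : ℝ≥0∞)) ^ (2:ℝ) := by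
  rcases le_or_gt 0 c with hc | hc
  · rw [abs_of_nonneg hc]; exact shift_sq u hu c hc
  · have h1 : (fun z => ((‖u z - u (z - c)‖₊ : ℝ≥0∞)) ^ (2:ℝ))
        = fun z => (fun w => ((‖u w - u (w - (-c))‖₊ : ℝ≥0∞)) ^ (2:ℝ)) (z - c) := by
      ext z
      simp only [sub_neg_eq_add, sub_add_cancel]
      rw [show ‖u z - u (z - c)‖₊ = ‖u (z - c) - u z‖₊ from by rw [← neg_sub, nnnorm_neg]]
    rw [h1, lintegral_sub_right_eq_self (fun w => ((‖u w - u (w - (-c))‖₊ : ℝ≥0∞)) ^ (2:ℝ)) c,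
      abs_of_neg hc]
    exact shift_sq u hu (-c) (by linarith)

/-- Cauchy–Schwarz / weighted bound for a series of functions in `L²`. -/
lemma tsum_sq_lintegral (φ : ℤ → ℝ → ℝ≥0∞) (c m : ℤ → ℝ≥0∞) (N : ℝ≥0∞)
    (hφ : ∀ k, Measurable (φ k)) (hm1 : ∀ k, 1 ≤ m k) (hmt : ∀ k, m k ≠ ∞)
    (hc : ∀ k, c k ≠ ∞)
    (hbd : ∀ k, ∫⁻ z, φ k z ^ (2:ℝ) ≤ m k ^ (2:ℝ) * N) :
    ∫⁻ z, (∑' k, c k * φ k z) ^ (2:ℝ) ≤ (∑' k, c k * m k) ^ (2:ℝ) * N := by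
  set S : ℝ≥0∞ := ∑' k, c k * m k with hS
  have hconj : Real.HolderConjugate 2 2 := Real.HolderConjugate.two_two
  have hm0 : ∀ k, m k ≠ 0 := fun k h => by simpa [h] using hm1 k
  set T : ℝ → ℝ≥0∞ := fun z => ∑' k, (c k / m k) * φ k z ^ (2:ℝ) with hT
  have hTmeas : Measurable T :=
    Measurable.ennreal_tsum fun k => ((hφ k).pow_const _).const_mul _
  -- pointwise Cauchy-Schwarz
  have hpt : ∀ z, (∑' k, c k * φ k z) ^ (2:ℝ) ≤ S * T z := by
    intro z
    have hsplit : ∀ k, c k * φ k z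
        = ((c k * m k) ^ (1/2:ℝ)) * (((c k / m k) ^ (1/2:ℝ)) * φ k z) := by
      intro k
      rw [← mul_assoc, ← ENNReal.mul_rpow_of_nonneg _ _ (by norm_num : (0:ℝ) ≤ 1/2)]
      congr 1
      have h2 : c k * m k * (c k / m k) = c k * c k := by
        rw [div_eq_mul_inv]
        calc c k * m k * (c k * (m k)⁻¹) = c k * c k * (m k * (m k)⁻¹) := by ring
          _ = c k * c k := by rw [ENNReal.mul_inv_cancel (hm0 k) (hmt k), mul_one]
      rw [h2, ← sq, ← ENNReal.rpow_natCast (c k) 2, ← ENNReal.rpow_mul]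
      norm_num
    have hH : ∑' k, c k * φ k z ≤ S ^ (1/2:ℝ) * (T z) ^ (1/2:ℝ) := by
      calc ∑' k, c k * φ k z
          = ∑' k, ((c k * m k) ^ (1/2:ℝ)) * (((c k / m k) ^ (1/2:ℝ)) * φ k z) := by
            exact tsum_congr hsplit
        _ = ∫⁻ k, ((c k * m k) ^ (1/2:ℝ)) * (((c k / m k) ^ (1/2:ℝ)) * φ k z)
              ∂(Measure.count) := (lintegral_count _).symm
        _ ≤ (∫⁻ k, ((c k * m k) ^ (1/2:ℝ)) ^ (2:ℝ) ∂(Measure.count)) ^ (1/2:ℝ) *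
            (∫⁻ k, (((c k / m k) ^ (1/2:ℝ)) * φ k z) ^ (2:ℝ) ∂(Measure.count)) ^ (1/2:ℝ) := by
            exact ENNReal.lintegral_mul_le_Lp_mul_Lq _ hconj
              (measurable_of_countable _).aemeasurable (measurable_of_countable _).aemeasurable
        _ = S ^ (1/2:ℝ) * (T z) ^ (1/2:ℝ) := by
            rw [lintegral_count, lintegral_count]
            congr 2
            · apply tsum_congr; intro k
              rw [← ENNReal.rpow_mul]; norm_num
            · apply tsum_congr; intro k
              rw [ENNReal.mul_rpow_of_nonneg _ _ (by norm_num : (0:ℝ) ≤ 2), ← ENNReal.rpow_mul]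
              norm_num
    calc (∑' k, c k * φ k z) ^ (2:ℝ) ≤ (S ^ (1/2:ℝ) * (T z) ^ (1/2:ℝ)) ^ (2:ℝ) :=
          ENNReal.rpow_le_rpow hH (by norm_num)
      _ = S * T z := by
          rw [ENNReal.mul_rpow_of_nonneg _ _ (by norm_num : (0:ℝ) ≤ 2), ← ENNReal.rpow_mul,
            ← ENNReal.rpow_mul]
          norm_num
  calc ∫⁻ z, (∑' k, c k * φ k z) ^ (2:ℝ) ≤ ∫⁻ z, S * T z := lintegral_mono hpt
    _ = S * ∫⁻ z, T z := lintegral_const_mul S hTmeas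
    _ ≤ S * (S * N) := by
        apply mul_le_mul_right
        calc ∫⁻ z, T z = ∑' k, ∫⁻ z, (c k / m k) * φ k z ^ (2:ℝ) :=
              lintegral_tsum fun k => (((hφ k).pow_const _).const_mul _).aemeasurable
          _ = ∑' k, (c k / m k) * ∫⁻ z, φ k z ^ (2:ℝ) := by
              apply tsum_congr; intro k
              exact lintegral_const_mul _ ((hφ k).pow_const _)
          _ ≤ ∑' k, (c k / m k) * (m k ^ (2:ℝ) * N) :=
              ENNReal.tsum_le_tsum fun k => mul_le_mul_right (hbd k) _
          _ = ∑' k, (c k * m k) * N := by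
              apply tsum_congr; intro k
              rw [div_eq_mul_inv, ENNReal.rpow_two]
              calc c k * (m k)⁻¹ * (m k ^ 2 * N) = c k * m k * N * ((m k)⁻¹ * m k) := by ring
                _ = c k * m k * N := by
                    rw [ENNReal.inv_mul_cancel (hm0 k) (hmt k), mul_one]
          _ = S * N := ENNReal.tsum_mul_right
    _ = S ^ (2:ℝ) * N := by rw [ENNReal.rpow_two]; ring

lemma memL2_of_sq_lintegral {f : ℝ → ℝ} (hmeas : AEStronglyMeasurable f volume) (C : ℝ≥0∞)
    (hC : C ≠ ∞) (h : ∫⁻ z, ((‖f z‖₊ : ℝ≥0∞)) ^ (2:ℝ) ≤ C) : MemLp f 2 volume := by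
  refine ⟨hmeas, ?_⟩
  rw [eLpNorm_eq_lintegral_rpow_enorm_toReal two_ne_zero ENNReal.ofNat_ne_top]
  simp only [ENNReal.toReal_ofNat]
  exact ENNReal.rpow_lt_top_of_nonneg (by norm_num) (ne_top_of_le_ne_top hC h)

lemma sq_lintegral_ne_top_of_memL2 {f : ℝ → ℝ} (hf : MemLp f 2 volume) :
    ∫⁻ z, ((‖f z‖₊ : ℝ≥0∞)) ^ (2:ℝ) ≠ ∞ := by
  have h := hf.2
  rw [eLpNorm_eq_lintegral_rpow_enorm_toReal two_ne_zero ENNReal.ofNat_ne_top] at h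
  simp only [ENNReal.toReal_ofNat] at h
  intro hcon
  change (∫⁻ x, ‖f x‖ₑ ^ (2:ℝ)) = ∞ at hcon
  rw [hcon] at h
  simp [ENNReal.rpow_eq_top_iff] at h

lemma aux_mul_integrable {f g : ℝ → ℝ} (hf : MemLp f 2 volume) (hg : MemLp g 2 volume) :
    Integrable (fun z => f z * g z) volume := by
  have h : MemLp (f • g) 1 volume := hg.smul hf
  exact memLp_one_iff_integrable.mp h

lemma aux_deriv_integral_zero {ψ D : ℝ → ℝ} (hD : ∀ z, HasDerivAt ψ (D z) z)
    (hint : Integrable D volume) (htop : Tendsto ψ atTop (nhds 0))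
    (hbot : Tendsto ψ atBot (nhds 0)) : ∫ z, D z = 0 := by
  have h1 : ∫ z in Set.Ioi (0:ℝ), D z = 0 - ψ 0 :=
    integral_Ioi_of_hasDerivAt_of_tendsto' (fun x _ => hD x) hint.integrableOn htop
  have h2 : ∫ z in Set.Iic (0:ℝ), D z = ψ 0 - 0 :=
    integral_Iic_of_hasDerivAt_of_tendsto' (fun x _ => hD x) hint.integrableOn hbot
  rw [← intervalIntegral.integral_Iic_add_Ioi hint.integrableOn hint.integrableOn, h1, h2]
  ring

end Helpers

/-- If `u ∈ C¹(ℝ)`, `u' ∈ L²(ℝ)` and `u` has finite limits at `±∞`,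
then `Δu ∈ L²(ℝ)` and `(Δu, u') = 0`. -/
theorem stmt_1 (a : ℤ → ℝ) (ha : CoeffH2 a) (u : ℝ → ℝ) (A B : ℝ)
    (hu : ContDiff ℝ 1 u) (hu' : MemLp (deriv u) 2 volume)
    (hA : Tendsto u atBot (nhds A)) (hB : Tendsto u atTop (nhds B)) :
    MemLp (deltaOp a u) 2 volume ∧ (∫ z : ℝ, deltaOp a u z * deriv u z) = 0 := by
  obtain ⟨ha1, ha2, -, ha4, ha5⟩ := ha
  have hasum : Summable a := summable_abs_iff.mp ha1
  have huc : Continuous u := hu.continuous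
  have hcd : Continuous (deriv u) := hu.continuous_deriv le_rfl
  obtain ⟨M, hM0, hM⟩ := aux_bdd huc hA hB
  set v : ℤ → ℝ → ℝ := fun k z => u (z - (k:ℝ)) - u z with hvdef
  have hvcont : ∀ k, Continuous (v k) := fun k =>
    (huc.comp (continuous_id.sub continuous_const)).sub huc
  have hvbd : ∀ k z, ‖v k z‖ ≤ 2 * M := by
    intro k z
    calc ‖v k z‖ ≤ ‖u (z - (k:ℝ))‖ + ‖u z‖ := norm_sub_le _ _
      _ ≤ M + M := add_le_add (hM _) (hM _)
      _ = 2 * M := by ring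
  set N : ℝ≥0∞ := ∫⁻ t, ((‖deriv u t‖₊ : ℝ≥0∞)) ^ (2:ℝ) with hN
  have hNtop : N ≠ ∞ := sq_lintegral_ne_top_of_memL2 hu'
  set m : ℤ → ℝ≥0∞ := fun k => ENNReal.ofReal (max |(k:ℝ)| 1) with hm
  set c : ℤ → ℝ≥0∞ := fun k => ((‖a k‖₊ : ℝ≥0∞)) with hcdef
  set V : ℤ → ℝ → ℝ≥0∞ := fun k z => ((‖v k z‖₊ : ℝ≥0∞)) with hV
  have hVmeas : ∀ k, Measurable (V k) := fun k =>
    (hvcont k).measurable.nnnorm.coe_nnreal_ennreal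
  have hbd : ∀ k, ∫⁻ z, V k z ^ (2:ℝ) ≤ m k ^ (2:ℝ) * N := by
    intro k
    have h1 : ∀ z, V k z = ((‖u z - u (z - (k:ℝ))‖₊ : ℝ≥0∞)) := by
      intro z
      rw [hV]; simp only
      rw [show v k z = -(u z - u (z - (k:ℝ))) from by rw [hvdef]; ring, nnnorm_neg]
    calc ∫⁻ z, V k z ^ (2:ℝ) = ∫⁻ z, ((‖u z - u (z - (k:ℝ))‖₊ : ℝ≥0∞)) ^ (2:ℝ) := by
          simp_rw [h1]
      _ ≤ (ENNReal.ofReal |(k:ℝ)|) ^ (2:ℝ) * N := shift_sq' u hu _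
      _ ≤ m k ^ (2:ℝ) * N := by
          apply mul_le_mul_left
          exact ENNReal.rpow_le_rpow (ENNReal.ofReal_le_ofReal (le_max_left _ _)) (by norm_num)
  have hm1 : ∀ k, 1 ≤ m k := by
    intro k
    rw [hm]; simp only
    rw [← ENNReal.ofReal_one]
    exact ENNReal.ofReal_le_ofReal (le_max_right _ _)
  set S : ℝ≥0∞ := ∑' k, c k * m k with hSdef
  have hsummS : Summable (fun k : ℤ => |a k| * max |(k:ℝ)| 1) := by
    apply Summable.of_nonneg_of_le (fun k => by positivity) (fun k => ?_) (ha1.add ha5)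
    have hmax : max |(k:ℝ)| 1 ≤ 1 + (k:ℝ)^2 := by
      apply max_le
      · nlinarith [sq_nonneg (|(k:ℝ)| - 1), sq_abs (k:ℝ)]
      · nlinarith [sq_nonneg (k:ℝ)]
    calc |a k| * max |(k:ℝ)| 1 ≤ |a k| * (1 + (k:ℝ)^2) :=
          mul_le_mul_of_nonneg_left hmax (abs_nonneg _)
      _ = |a k| + |a k| * (k:ℝ)^2 := by ring
  have hcm : ∀ k : ℤ, c k * m k = ENNReal.ofReal (|a k| * max |(k:ℝ)| 1) := by
    intro k
    rw [hcdef, hm]; simp only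
    rw [← enorm_eq_nnnorm, Real.enorm_eq_ofReal_abs, ← ENNReal.ofReal_mul (abs_nonneg _)]
  have hStop : S ≠ ∞ := by
    rw [hSdef]
    simp_rw [hcm]
    rw [← ENNReal.ofReal_tsum_of_nonneg (fun k => by positivity) hsummS]
    exact ENNReal.ofReal_ne_top
  have hsum1 : ∀ z, Summable (fun k : ℤ => a k * u (z - (k:ℝ))) := by
    intro z
    apply Summable.of_norm_bounded (ha1.mul_right M)
    intro k
    rw [norm_mul]
    exact mul_le_mul_of_nonneg_left (hM _) (abs_nonneg _)
  have hsumv : ∀ z, Summable (fun k : ℤ => ‖a k * v k z‖) := by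
    intro z
    apply Summable.of_nonneg_of_le (fun k => norm_nonneg _) (fun k => ?_) (ha1.mul_right (2*M))
    rw [norm_mul]
    exact mul_le_mul_of_nonneg_left (hvbd k z) (abs_nonneg _)
  have hFv : ∀ z, HasSum (fun k => a k * v k z) (deltaOp a u z) := by
    intro z
    have h1 : HasSum (fun k : ℤ => a k * u (z - (k:ℝ))) (deltaOp a u z) := (hsum1 z).hasSum
    have h2 : HasSum (fun k : ℤ => a k * u z) 0 := by
      have h3 := hasum.hasSum.mul_right (u z)
      rwa [ha2, zero_mul] at h3
    have h3 := h1.sub h2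
    rw [sub_zero] at h3
    convert h3 using 2 with k
    · rfl
    rw [hvdef]; ring
  set G : ℝ → ℝ := fun z => ∑' k, ‖a k * v k z‖ with hGdef
  have hGcont : Continuous G := by
    apply continuous_tsum (fun k => ((continuous_const.mul (hvcont k)).norm))
      (ha1.mul_right (2*M))
    intro k z
    rw [norm_norm, Pi.mul_apply, norm_mul]
    exact mul_le_mul_of_nonneg_left (hvbd k z) (abs_nonneg _)
  have hGeq : ∀ z, ((‖G z‖₊ : ℝ≥0∞)) = ∑' k, c k * V k z := by
    intro z
    rw [← enorm_eq_nnnorm, Real.enorm_eq_ofReal_abs, abs_of_nonneg (tsum_nonneg (fun k => norm_nonneg _))]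
    rw [ENNReal.ofReal_tsum_of_nonneg (fun k => norm_nonneg _) (hsumv z)]
    apply tsum_congr; intro k
    rw [show ENNReal.ofReal ‖a k * v k z‖ = ((‖a k * v k z‖₊ : ℝ≥0∞)) from
      ofReal_norm _, nnnorm_mul, ENNReal.coe_mul]
  have hGL2 : MemLp G 2 volume := by
    apply memL2_of_sq_lintegral hGcont.aestronglyMeasurable (S ^ (2:ℝ) * N)
      (ENNReal.mul_ne_top (ENNReal.rpow_ne_top_of_nonneg (by norm_num) hStop) hNtop)
    calc ∫⁻ z, ((‖G z‖₊ : ℝ≥0∞)) ^ (2:ℝ) = ∫⁻ z, (∑' k, c k * V k z) ^ (2:ℝ) := by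
          simp_rw [hGeq]
      _ ≤ S ^ (2:ℝ) * N := tsum_sq_lintegral V c m N hVmeas hm1
          (fun k => ENNReal.ofReal_ne_top) (fun k => ENNReal.coe_ne_top) hbd
  have hFcont : Continuous (deltaOp a u) := by
    unfold deltaOp
    apply continuous_tsum
      (fun k : ℤ => continuous_const.mul (huc.comp (continuous_id.sub continuous_const)))
      (ha1.mul_right M)
    intro k z
    rw [Pi.mul_apply, norm_mul]
    exact mul_le_mul_of_nonneg_left (hM _) (abs_nonneg _)
  have hFle : ∀ z, ‖deltaOp a u z‖ ≤ ‖G z‖ := by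
    intro z
    rw [← (hFv z).tsum_eq]
    calc ‖∑' k, a k * v k z‖ ≤ ∑' k, ‖a k * v k z‖ := norm_tsum_le_tsum_norm (hsumv z)
      _ ≤ ‖G z‖ := le_abs_self _
  have hFL2 : MemLp (deltaOp a u) 2 volume :=
    ⟨hFcont.aestronglyMeasurable, lt_of_le_of_lt (eLpNorm_mono hFle) hGL2.2⟩
  refine ⟨hFL2, ?_⟩
  have hvL2 : ∀ k, MemLp (v k) 2 volume := fun k =>
    memL2_of_sq_lintegral (hvcont k).aestronglyMeasurable (m k ^ (2:ℝ) * N)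
      (ENNReal.mul_ne_top (ENNReal.rpow_ne_top_of_nonneg (by norm_num)
        ENNReal.ofReal_ne_top) hNtop)
      (by simpa only [hV] using hbd k)
  have hshiftL2 : ∀ k : ℤ, MemLp (fun z => deriv u (z - (k:ℝ))) 2 volume := by
    intro k
    apply memL2_of_sq_lintegral
      ((hcd.comp (continuous_id.sub continuous_const)).aestronglyMeasurable) N hNtop
    rw [hN]
    exact le_of_eq (lintegral_sub_right_eq_self
      (fun t => ((‖deriv u t‖₊ : ℝ≥0∞)) ^ (2:ℝ)) (k:ℝ))
  set J : ℤ → ℝ := fun k => ∫ z, v k z * deriv u z with hJ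
  have hintvk : ∀ k : ℤ, Integrable (fun z => v k z * deriv u z) volume :=
    fun k => aux_mul_integrable (hvL2 k) hu'
  have hJneg : ∀ k : ℤ, J (-k) = - J k := by
    intro k
    have hb1 : J (-k) = ∫ z, (u (z + (k:ℝ)) - u z) * deriv u z := by
      rw [hJ]; simp only
      congr 1; ext z
      rw [hvdef]; push_cast
      rw [sub_neg_eq_add]
    set H : ℝ → ℝ := fun y => (u y - u (y - (k:ℝ))) * deriv u (y - (k:ℝ)) with hH
    have hb2 : ∫ z, (u (z + (k:ℝ)) - u z) * deriv u z = ∫ y, H y := by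
      rw [← integral_add_right_eq_self H (k:ℝ)]
      congr 1; ext z
      rw [hH]; simp only [add_sub_cancel_right]
    have hb3 : ∫ y, H y = - ∫ z, v k z * deriv u (z - (k:ℝ)) := by
      rw [← integral_neg]
      congr 1; ext y
      rw [hH, hvdef]; simp only; ring
    have hψ : ∀ z, HasDerivAt (fun y => (u y - u (y - (k:ℝ)))^2)
        (2 * (u z - u (z - (k:ℝ))) * (deriv u z - deriv u (z - (k:ℝ)))) z := by
      intro z
      have h1 : HasDerivAt (fun y => u y - u (y - (k:ℝ)))
          (deriv u z - deriv u (z - (k:ℝ))) z := by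
        apply HasDerivAt.sub ((hu.differentiable one_ne_zero z).hasDerivAt)
        have h2 : HasDerivAt (fun y : ℝ => y - (k:ℝ)) 1 z := (hasDerivAt_id z).sub_const _
        have h3 := ((hu.differentiable one_ne_zero (z - (k:ℝ))).hasDerivAt).comp z h2
        simpa [Function.comp_def] using h3
      have h4 := h1.pow 2
      simpa [mul_comm, pow_one, Pi.pow_def] using h4
    have hDint : Integrable (fun z => 2 * (u z - u (z - (k:ℝ))) *
        (deriv u z - deriv u (z - (k:ℝ)))) volume := by
      have hprod := aux_mul_integrable (hvL2 k) (hu'.sub (hshiftL2 k))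
      have h5 := hprod.const_mul (-2)
      apply h5.congr
      filter_upwards with z
      rw [hvdef]; simp only [Pi.sub_apply]; ring
    have hshiftTop : Tendsto (fun y : ℝ => y - (k:ℝ)) atTop atTop := by
      have h6 := tendsto_atTop_add_const_right atTop (-(k:ℝ)) tendsto_id
      simpa [sub_eq_add_neg] using h6
    have hshiftBot : Tendsto (fun y : ℝ => y - (k:ℝ)) atBot atBot := by
      have h6 := tendsto_atBot_add_const_right atBot (-(k:ℝ)) tendsto_id
      simpa [sub_eq_add_neg] using h6
    have htop : Tendsto (fun y => (u y - u (y - (k:ℝ)))^2) atTop (nhds 0) := by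
      have h6 := (hB.sub (hB.comp hshiftTop)).pow 2
      simpa using h6
    have hbot : Tendsto (fun y => (u y - u (y - (k:ℝ)))^2) atBot (nhds 0) := by
      have h6 := (hA.sub (hA.comp hshiftBot)).pow 2
      simpa using h6
    have hzero : ∫ z, v k z * (deriv u z - deriv u (z - (k:ℝ))) = 0 := by
      have h0 := aux_deriv_integral_zero hψ hDint htop hbot
      have h7 : ∫ z, v k z * (deriv u z - deriv u (z - (k:ℝ)))
          = (-1/2) * ∫ z, 2 * (u z - u (z - (k:ℝ))) * (deriv u z - deriv u (z - (k:ℝ))) := by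
        rw [← integral_const_mul]
        congr 1; ext z
        rw [hvdef]; simp only; ring
      rw [h7, h0, mul_zero]
    have hsubint : ∫ z, v k z * (deriv u z - deriv u (z - (k:ℝ)))
        = J k - ∫ z, v k z * deriv u (z - (k:ℝ)) := by
      rw [hJ]; simp only
      rw [← integral_sub (hintvk k) (aux_mul_integrable (hvL2 k) (hshiftL2 k))]
      congr 1; ext z; ring
    have h8 : ∫ z, v k z * deriv u (z - (k:ℝ)) = J k := by
      have h9 := hsubint.symm.trans hzero
      linarith
    rw [hb1, hb2, hb3, h8]
  have heq : ∀ k : ℤ, ∫ z, a k * v k z * deriv u z = a k * J k := by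
    intro k
    rw [hJ]; simp only
    rw [← integral_const_mul]
    congr 1; ext z; ring
  have hhassum : HasSum (fun k => a k * J k) (∫ z, deltaOp a u z * deriv u z) := by
    have hds := hasSum_integral_of_dominated_convergence (μ := volume)
      (F := fun (k : ℤ) z => a k * v k z * deriv u z)
      (f := fun z => deltaOp a u z * deriv u z)
      (fun k z => ‖a k * v k z‖ * ‖deriv u z‖)
      (fun k => (((continuous_const.mul (hvcont k)).mul hcd)).aestronglyMeasurable)
      (fun k => Eventually.of_forall (fun z => le_of_eq (norm_mul _ _)))
      (Eventually.of_forall (fun z => (hsumv z).mul_right _))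
      ?_ (Eventually.of_forall (fun z => (hFv z).mul_right _))
    · simp_rw [heq] at hds
      exact hds
    · apply (aux_mul_integrable hGL2 hu'.norm).congr
      filter_upwards with z
      rw [← tsum_mul_right]
  have hzero_sum : (∑' k : ℤ, a k * J k) = 0 := by
    have hneg : ∀ k : ℤ, a (-k) * J (-k) = -(a k * J k) := by
      intro k; rw [hJneg k, ← ha4 k]; ring
    have h1 : (∑' k : ℤ, a (-k) * J (-k)) = ∑' k : ℤ, a k * J k :=
      (Equiv.neg ℤ).tsum_eq (fun k => a k * J k)
    have h2 : (∑' k : ℤ, a (-k) * J (-k)) = -(∑' k : ℤ, a k * J k) := by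
      calc (∑' k : ℤ, a (-k) * J (-k)) = ∑' k : ℤ, -(a k * J k) := tsum_congr hneg
        _ = -(∑' k : ℤ, a k * J k) := tsum_neg
    have h3 := h1.symm.trans h2
    linarith
  rw [← hhassum.tsum_eq, hzero_sum]
end

section
/- Let u ∈ C¹(ℝ) with u' ∈ L²(ℝ), and suppose u has finite limits at -∞ and at +∞. Then ∫_ℝ (Δu)(z)² dz ≤ (Σ_{k∈ℤ} |a_k|)·(Σ_{k∈ℤ} |a_k|·k²)·‖u'‖²_{L²(ℝ)}; in particular ‖Δu‖_{L²(ℝ)} ≤ C‖u'‖_{L²(ℝ)} with C depending only on the coefficients (a_k). -/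
open MeasureTheory Filter Real
open scoped ENNReal NNReal

section AuxKey

-- boundedness lemma
lemma aux_bounded {u : ℝ → ℝ} {A B : ℝ} (hc : Continuous u)
    (hA : Tendsto u atBot (nhds A)) (hB : Tendsto u atTop (nhds B)) :
    ∃ C : ℝ, 0 ≤ C ∧ ∀ x, |u x| ≤ C := by
  have h1 : ∀ᶠ x in atTop, dist (u x) B < 1 := hB (Metric.ball_mem_nhds B one_pos)
  have h2 : ∀ᶠ x in atBot, dist (u x) A < 1 := hA (Metric.ball_mem_nhds A one_pos)
  obtain ⟨M, hM⟩ := eventually_atTop.1 h1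
  obtain ⟨m, hm⟩ := eventually_atBot.1 h2
  obtain ⟨C0, hC0⟩ := (isCompact_Icc (a := m) (b := M)).exists_bound_of_continuousOn
    hc.continuousOn
  refine ⟨max (max (|A| + 1) (|B| + 1)) (max C0 0), le_trans (le_max_right _ _) (le_max_right _ _), fun x => ?_⟩
  rcases le_total x m with h | h
  · have := hm x h
    rw [Real.dist_eq] at this
    have : |u x| ≤ |A| + 1 := by
      calc |u x| = |u x - A + A| := by ring_nf
        _ ≤ |u x - A| + |A| := abs_add_le _ _
        _ ≤ |A| + 1 := by linarith
    exact this.trans (le_trans (le_trans (le_max_left _ _) (le_max_left _ _)) le_rfl)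
  rcases le_total x M with h' | h'
  · have := hC0 x ⟨h, h'⟩
    rw [Real.norm_eq_abs] at this
    exact this.trans (le_trans (le_max_left _ _) (le_max_right _ _))
  · have := hM x h'
    rw [Real.dist_eq] at this
    have : |u x| ≤ |B| + 1 := by
      calc |u x| = |u x - B + B| := by ring_nf
        _ ≤ |u x - B| + |B| := abs_add_le _ _
        _ ≤ |B| + 1 := by linarith
    exact this.trans (le_trans (le_trans (le_max_right _ _) (le_max_left _ _)) le_rfl)

-- tsum Cauchy-Schwarz
lemma aux_tsum_cs {f g : ℤ → ℝ} (hf : ∀ k, 0 ≤ f k) (hg : ∀ k, 0 ≤ g k)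
    (hf2 : Summable (fun k => f k ^ 2)) (hg2 : Summable (fun k => g k ^ 2)) :
    (∑' k, f k * g k) ^ 2 ≤ (∑' k, f k ^ 2) * (∑' k, g k ^ 2) := by
  have hs : Summable (fun k => f k * g k) := by
    refine Summable.of_nonneg_of_le (fun k => mul_nonneg (hf k) (hg k)) (fun k => ?_) (hf2.add hg2)
    nlinarith [sq_nonneg (f k - g k)]
  have hR : 0 ≤ (∑' k, f k ^ 2) * (∑' k, g k ^ 2) :=
    mul_nonneg (tsum_nonneg fun k => sq_nonneg _) (tsum_nonneg fun k => sq_nonneg _)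
  have h : (∑' k, f k * g k) ≤ Real.sqrt ((∑' k, f k ^ 2) * (∑' k, g k ^ 2)) := by
    refine hs.tsum_le_of_sum_le fun s => ?_
    have h1 : (∑ k ∈ s, f k * g k) ^ 2 ≤ (∑ k ∈ s, f k ^ 2) * ∑ k ∈ s, g k ^ 2 :=
      Finset.sum_mul_sq_le_sq_mul_sq s f g
    have h2 : (∑ k ∈ s, f k ^ 2) * ∑ k ∈ s, g k ^ 2 ≤ (∑' k, f k ^ 2) * (∑' k, g k ^ 2) := by
      refine mul_le_mul (Summable.sum_le_tsum s (fun k _ => sq_nonneg _) hf2)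
        (Summable.sum_le_tsum s (fun k _ => sq_nonneg _) hg2)
        (Finset.sum_nonneg fun k _ => sq_nonneg _) (tsum_nonneg fun k => sq_nonneg _)
    have h3 : 0 ≤ ∑ k ∈ s, f k * g k := Finset.sum_nonneg fun k _ => mul_nonneg (hf k) (hg k)
    calc (∑ k ∈ s, f k * g k) = Real.sqrt ((∑ k ∈ s, f k * g k) ^ 2) := (Real.sqrt_sq h3).symm
      _ ≤ Real.sqrt ((∑' k, f k ^ 2) * (∑' k, g k ^ 2)) := Real.sqrt_le_sqrt (h1.trans h2)
  calc (∑' k, f k * g k) ^ 2 ≤ Real.sqrt ((∑' k, f k ^ 2) * (∑' k, g k ^ 2)) ^ 2 := by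
        apply pow_le_pow_left₀ (tsum_nonneg fun k => mul_nonneg (hf k) (hg k)) h
    _ = _ := Real.sq_sqrt hR

lemma aux_ofReal_sq (x : ℝ) : ENNReal.ofReal (x ^ 2) = (‖x‖₊ : ℝ≥0∞) ^ 2 := by
  rw [← sq_abs, ← Real.norm_eq_abs, ENNReal.ofReal_pow (norm_nonneg x),
    ofReal_norm_eq_enorm, enorm_eq_nnnorm]

lemma aux_shift_bound {u : ℝ → ℝ} (hu : ContDiff ℝ 1 u) {c : ℝ} (hc : 0 ≤ c) :
    ∫⁻ z, ENNReal.ofReal ((u (z - c) - u z) ^ 2) ≤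
      ENNReal.ofReal (c ^ 2) * ∫⁻ t, ENNReal.ofReal (deriv u t ^ 2) := by
  set v := deriv u with hv
  have hcv : Continuous v := hu.continuous_deriv le_rfl
  set h : ℝ → ℝ≥0∞ := fun t => ENNReal.ofReal (v t ^ 2) with hh
  have hmeas : Measurable h := ENNReal.measurable_ofReal.comp (hcv.pow 2).measurable
  have hnn : Measurable fun t => (‖v t‖₊ : ℝ≥0∞) := hcv.measurable.nnnorm.coe_nnreal_ennreal
  -- pointwise bound
  have hpt : ∀ z : ℝ, ENNReal.ofReal ((u (z - c) - u z) ^ 2) ≤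
      ENNReal.ofReal c * ∫⁻ t in Set.Ioc (z - c) z, h t := by
    intro z
    have hle : z - c ≤ z := by linarith
    have hftc : u z - u (z - c) = ∫ t in (z - c)..z, v t :=
      (intervalIntegral.integral_deriv_eq_sub
        (fun x _ => (hu.differentiable one_ne_zero).differentiableAt)
        (hcv.intervalIntegrable _ _)).symm
    have h1 : (u (z - c) - u z) ^ 2 = (∫ t in Set.Ioc (z - c) z, v t) ^ 2 := by
      rw [← intervalIntegral.integral_of_le hle, ← hftc]; ring
    rw [h1, aux_ofReal_sq]
    have h2 : (‖∫ t in Set.Ioc (z - c) z, v t‖₊ : ℝ≥0∞) ≤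
        ∫⁻ t in Set.Ioc (z - c) z, (‖v t‖₊ : ℝ≥0∞) :=
      by simpa only [enorm_eq_nnnorm] using enorm_integral_le_lintegral_enorm _
    have h3 : (‖∫ t in Set.Ioc (z - c) z, v t‖₊ : ℝ≥0∞) ^ 2 ≤
        (∫⁻ t in Set.Ioc (z - c) z, (‖v t‖₊ : ℝ≥0∞)) ^ 2 := by
      exact pow_le_pow_left' h2 2
    refine h3.trans ?_
    -- Cauchy-Schwarz via Hölder
    have hpq : Real.HolderConjugate 2 2 := Real.HolderConjugate.two_two
    have hold := ENNReal.lintegral_mul_le_Lp_mul_Lq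
      (volume.restrict (Set.Ioc (z - c) z)) hpq
      (f := fun t => (‖v t‖₊ : ℝ≥0∞)) (g := fun _ => 1)
      hnn.aemeasurable aemeasurable_const
    simp only [mul_one, Pi.mul_apply, ENNReal.one_rpow, lintegral_const,
      Measure.restrict_apply, MeasurableSet.univ, Set.univ_inter, one_mul] at hold
    have hvol : volume (Set.Ioc (z - c) z) = ENNReal.ofReal c := by
      rw [Real.volume_Ioc]; congr 1; ring
    rw [hvol] at hold
    have hK : ∀ t : ℝ, (‖v t‖₊ : ℝ≥0∞) ^ (2 : ℝ) = h t := by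
      intro t
      rw [show (2 : ℝ) = ((2 : ℕ) : ℝ) by norm_num, ENNReal.rpow_natCast, hh]
      exact (aux_ofReal_sq (v t)).symm
    simp only [hK] at hold
    calc (∫⁻ t in Set.Ioc (z - c) z, (‖v t‖₊ : ℝ≥0∞)) ^ 2
        ≤ ((∫⁻ t in Set.Ioc (z - c) z, h t) ^ (1/2 : ℝ) * ENNReal.ofReal c ^ (1/2 : ℝ)) ^ 2 := by
          exact pow_le_pow_left' hold 2
      _ = ENNReal.ofReal c * ∫⁻ t in Set.Ioc (z - c) z, h t := by
          rw [mul_pow, ← ENNReal.rpow_natCast (_ ^ (1/2 : ℝ)), ← ENNReal.rpow_natCast ((ENNReal.ofReal c) ^ (1/2 : ℝ)), ← ENNReal.rpow_mul, ← ENNReal.rpow_mul]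
          norm_num [mul_comm]
  refine (lintegral_mono hpt).trans ?_
  rw [lintegral_const_mul' _ _ ENNReal.ofReal_ne_top]
  -- Fubini
  set S : Set (ℝ × ℝ) := {p : ℝ × ℝ | p.1 - c < p.2 ∧ p.2 ≤ p.1} with hS
  have hSm : MeasurableSet S := by
    have h1 : IsOpen {p : ℝ × ℝ | p.1 - c < p.2} :=
      isOpen_lt (continuous_fst.sub continuous_const) continuous_snd
    have h2 : IsClosed {p : ℝ × ℝ | p.2 ≤ p.1} := isClosed_le continuous_snd continuous_fst
    exact h1.measurableSet.inter h2.measurableSet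
  have hFm : Measurable fun p : ℝ × ℝ => S.indicator (fun q : ℝ × ℝ => h q.2) p :=
    (hmeas.comp measurable_snd).indicator hSm
  have hswap : ∫⁻ z, ∫⁻ t in Set.Ioc (z - c) z, h t
      = ∫⁻ t, h t * ENNReal.ofReal c := by
    have e1 : ∀ z : ℝ, ∫⁻ t in Set.Ioc (z - c) z, h t
        = ∫⁻ t, S.indicator (fun q : ℝ × ℝ => h q.2) (z, t) := by
      intro z
      rw [← lintegral_indicator measurableSet_Ioc]
      refine lintegral_congr fun t => ?_
      by_cases hm : t ∈ Set.Ioc (z - c) z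
      · have hm' : (z, t) ∈ S := ⟨hm.1, hm.2⟩
        rw [Set.indicator_of_mem hm, Set.indicator_of_mem hm']
      · have hm' : (z, t) ∉ S := fun hc' => hm ⟨hc'.1, hc'.2⟩
        rw [Set.indicator_of_notMem hm, Set.indicator_of_notMem hm']
    simp_rw [e1]
    rw [lintegral_lintegral_swap hFm.aemeasurable]
    congr 1; ext t
    have e2 : ∀ z : ℝ, S.indicator (fun q : ℝ × ℝ => h q.2) (z, t)
        = (Set.Ico t (t + c)).indicator (fun _ => h t) z := by
      intro z
      by_cases hm : z ∈ Set.Ico t (t + c)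
      · have hm' : (z, t) ∈ S := ⟨by have := hm.2; simp only [Set.mem_setOf_eq]; linarith, hm.1⟩
        rw [Set.indicator_of_mem hm, Set.indicator_of_mem hm']
      · have hm' : (z, t) ∉ S := by
          intro hc'
          exact hm ⟨hc'.2, by have := hc'.1; simp only [Set.mem_setOf_eq] at this; linarith⟩
        rw [Set.indicator_of_notMem hm, Set.indicator_of_notMem hm']
    simp_rw [e2]
    rw [lintegral_indicator_const measurableSet_Ico, Real.volume_Ico]
    congr 2; ring
  rw [hswap, lintegral_mul_const' _ _ ENNReal.ofReal_ne_top]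
  have : ENNReal.ofReal c * ((∫⁻ a, h a) * ENNReal.ofReal c)
      = ENNReal.ofReal (c ^ 2) * ∫⁻ a, h a := by
    rw [sq, ENNReal.ofReal_mul hc]; ring
  rw [this]


lemma aux_shift_k {u : ℝ → ℝ} (hu : ContDiff ℝ 1 u) (k : ℤ) :
    ∫⁻ z, ENNReal.ofReal ((u (z - (k : ℝ)) - u z) ^ 2) ≤
      ENNReal.ofReal (((k : ℝ)) ^ 2) * ∫⁻ t, ENNReal.ofReal (deriv u t ^ 2) := by
  rcases le_total 0 ((k : ℝ)) with hk | hk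
  · exact aux_shift_bound hu hk
  · have hc : (0 : ℝ) ≤ -(k : ℝ) := by linarith
    calc ∫⁻ z, ENNReal.ofReal ((u (z - (k : ℝ)) - u z) ^ 2)
        = ∫⁻ z, ENNReal.ofReal ((u ((z + (k : ℝ)) - (k : ℝ)) - u (z + (k : ℝ))) ^ 2) := by
          exact (lintegral_add_right_eq_self
            (fun w => ENNReal.ofReal ((u (w - (k : ℝ)) - u w) ^ 2)) ((k : ℝ))).symm
      _ = ∫⁻ z, ENNReal.ofReal ((u (z - (-(k : ℝ))) - u z) ^ 2) := by
          refine lintegral_congr fun z => ?_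
          have h1 : z + (k : ℝ) - (k : ℝ) = z := by ring
          have h2 : z - -(k : ℝ) = z + (k : ℝ) := by ring
          rw [h1, h2]
          congr 1
          ring
      _ ≤ ENNReal.ofReal ((-(k : ℝ)) ^ 2) * ∫⁻ t, ENNReal.ofReal (deriv u t ^ 2) :=
          aux_shift_bound hu hc
      _ = ENNReal.ofReal (((k : ℝ)) ^ 2) * ∫⁻ t, ENNReal.ofReal (deriv u t ^ 2) := by
          rw [neg_sq]

lemma aux_key (a : ℤ → ℝ) (ha : CoeffH2 a) (u : ℝ → ℝ) (A B : ℝ) (hu : ContDiff ℝ 1 u)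
    (hA : Tendsto u atBot (nhds A)) (hB : Tendsto u atTop (nhds B)) :
    ∫⁻ z, ENNReal.ofReal (deltaOp a u z ^ 2) ≤
      ENNReal.ofReal (∑' k : ℤ, |a k|) * ENNReal.ofReal (∑' k : ℤ, |a k| * (k : ℝ) ^ 2)
        * ∫⁻ t, ENNReal.ofReal (deriv u t ^ 2) := by
  obtain ⟨ha1, ha2, ha3, _, ha5⟩ := ha
  obtain ⟨C, hC0, hCb⟩ := aux_bounded hu.continuous hA hB
  set v := deriv u with hv
  set I := ∫⁻ t, ENNReal.ofReal (v t ^ 2) with hI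
  set S := ∑' k : ℤ, |a k| with hSdef
  set T := ∑' k : ℤ, |a k| * (k : ℝ) ^ 2 with hTdef
  set g : ℤ → ℝ → ℝ := fun k z => u (z - (k : ℝ)) - u z with hgdef
  have hS0 : 0 ≤ S := tsum_nonneg fun k => abs_nonneg _
  have hgb : ∀ k z, |g k z| ≤ 2 * C := by
    intro k z
    calc |g k z| ≤ |u (z - (k : ℝ))| + |u z| := abs_sub _ _
      _ ≤ 2 * C := by have := hCb (z - (k : ℝ)); have := hCb z; linarith
  have hsum1 : ∀ z : ℝ, Summable fun k : ℤ => a k * u (z - (k : ℝ)) := by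
    intro z
    refine Summable.of_norm_bounded (ha1.mul_right C) fun k => ?_
    rw [norm_mul, Real.norm_eq_abs, Real.norm_eq_abs]
    exact mul_le_mul_of_nonneg_left (hCb _) (abs_nonneg _)
  have hsumg : ∀ z : ℝ, Summable fun k : ℤ => a k * g k z := by
    intro z
    refine Summable.of_norm_bounded (ha1.mul_right (2 * C)) fun k => ?_
    rw [norm_mul, Real.norm_eq_abs, Real.norm_eq_abs]
    exact mul_le_mul_of_nonneg_left (hgb _ _) (abs_nonneg _)
  have hsumX : ∀ z : ℝ, Summable fun k : ℤ => |a k| * g k z ^ 2 := by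
    intro z
    refine Summable.of_nonneg_of_le
      (fun k => mul_nonneg (abs_nonneg _) (sq_nonneg _)) (fun k => ?_) (ha1.mul_right ((2*C)^2))
    refine mul_le_mul_of_nonneg_left ?_ (abs_nonneg _)
    rw [← sq_abs]
    exact pow_le_pow_left₀ (abs_nonneg _) (hgb k z) 2
  have hdelta : ∀ z : ℝ, deltaOp a u z = ∑' k : ℤ, a k * g k z := by
    intro z
    have hs2 : Summable fun k : ℤ => a k * u z := (ha1.of_abs).mul_right _
    have e : ∀ k : ℤ, a k * u (z - (k : ℝ)) = a k * g k z + a k * u z := by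
      intro k; simp only [hgdef]; ring
    rw [deltaOp, tsum_congr e, Summable.tsum_add (hsumg z) hs2, tsum_mul_right, ha2, zero_mul,
      add_zero]
  -- pointwise Cauchy-Schwarz
  have hptCS : ∀ z : ℝ, (deltaOp a u z) ^ 2 ≤ S * ∑' k : ℤ, |a k| * g k z ^ 2 := by
    intro z
    set f1 : ℤ → ℝ := fun k => Real.sqrt |a k| with hf1
    set f2 : ℤ → ℝ := fun k => Real.sqrt |a k| * |g k z| with hf2
    have hf1sq : ∀ k, f1 k ^ 2 = |a k| := fun k => Real.sq_sqrt (abs_nonneg _)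
    have hf2sq : ∀ k, f2 k ^ 2 = |a k| * g k z ^ 2 := by
      intro k
      rw [hf2, mul_pow, Real.sq_sqrt (abs_nonneg _), sq_abs]
    have hs1 : Summable fun k => f1 k ^ 2 := by
      simp only [hf1sq]; exact ha1
    have hs2 : Summable fun k => f2 k ^ 2 := by
      simp only [hf2sq]; exact hsumX z
    have hcs := aux_tsum_cs (fun k => Real.sqrt_nonneg _)
      (fun k => mul_nonneg (Real.sqrt_nonneg _) (abs_nonneg _)) hs1 hs2
    have habs : |deltaOp a u z| ≤ ∑' k : ℤ, f1 k * f2 k := by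
      rw [hdelta z]
      have hnorm : Summable fun k : ℤ => ‖a k * g k z‖ := by
        simpa only [Real.norm_eq_abs] using (hsumg z).abs
      calc |∑' k : ℤ, a k * g k z| ≤ ∑' k : ℤ, ‖a k * g k z‖ := by
            simpa [Real.norm_eq_abs] using norm_tsum_le_tsum_norm hnorm
        _ = ∑' k : ℤ, f1 k * f2 k := by
            refine tsum_congr fun k => ?_
            rw [hf1, hf2, ← mul_assoc, Real.mul_self_sqrt (abs_nonneg _)]
            rw [norm_mul, Real.norm_eq_abs, Real.norm_eq_abs]
    calc (deltaOp a u z) ^ 2 = |deltaOp a u z| ^ 2 := (sq_abs _).symm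
      _ ≤ (∑' k : ℤ, f1 k * f2 k) ^ 2 := pow_le_pow_left₀ (abs_nonneg _) habs 2
      _ ≤ (∑' k, f1 k ^ 2) * (∑' k, f2 k ^ 2) := hcs
      _ = S * ∑' k : ℤ, |a k| * g k z ^ 2 := by
          rw [tsum_congr hf1sq, tsum_congr hf2sq]
  -- measurability bits
  have hgc : ∀ k : ℤ, Continuous (g k) := by
    intro k
    exact (hu.continuous.comp (continuous_id.sub continuous_const)).sub hu.continuous
  have hmeask : ∀ k : ℤ, Measurable fun z => ENNReal.ofReal (|a k| * g k z ^ 2) :=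
    fun k => ENNReal.measurable_ofReal.comp
      (continuous_const.mul ((hgc k).pow 2)).measurable
  -- main chain
  calc ∫⁻ z, ENNReal.ofReal (deltaOp a u z ^ 2)
      ≤ ∫⁻ z, ENNReal.ofReal S * ∑' k : ℤ, ENNReal.ofReal (|a k| * g k z ^ 2) := by
        refine lintegral_mono fun z => ?_
        refine le_trans (ENNReal.ofReal_le_ofReal (hptCS z)) ?_
        rw [ENNReal.ofReal_mul hS0]
        refine mul_le_mul_right ?_ _
        rw [ENNReal.ofReal_tsum_of_nonneg
          (fun k => mul_nonneg (abs_nonneg _) (sq_nonneg _)) (hsumX z)]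
    _ = ENNReal.ofReal S * ∑' k : ℤ, ∫⁻ z, ENNReal.ofReal (|a k| * g k z ^ 2) := by
        rw [lintegral_const_mul' _ _ ENNReal.ofReal_ne_top,
          lintegral_tsum fun k => (hmeask k).aemeasurable]
    _ ≤ ENNReal.ofReal S * ∑' k : ℤ, ENNReal.ofReal (|a k| * (k : ℝ) ^ 2) * I := by
        refine mul_le_mul_right (ENNReal.tsum_le_tsum fun k => ?_) _
        have e1 : ∀ z : ℝ, ENNReal.ofReal (|a k| * g k z ^ 2)
            = ENNReal.ofReal (|a k|) * ENNReal.ofReal (g k z ^ 2) := fun z =>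
          ENNReal.ofReal_mul (abs_nonneg _)
        simp_rw [e1]
        rw [lintegral_const_mul' _ _ ENNReal.ofReal_ne_top]
        calc ENNReal.ofReal (|a k|) * ∫⁻ z, ENNReal.ofReal (g k z ^ 2)
            ≤ ENNReal.ofReal (|a k|) * (ENNReal.ofReal ((k : ℝ) ^ 2) * I) :=
              mul_le_mul_right (aux_shift_k hu k) _
          _ = ENNReal.ofReal (|a k| * (k : ℝ) ^ 2) * I := by
              rw [ENNReal.ofReal_mul (abs_nonneg _), mul_assoc]
    _ = ENNReal.ofReal S * ENNReal.ofReal T * I := by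
        rw [ENNReal.tsum_mul_right, ← ENNReal.ofReal_tsum_of_nonneg
          (fun k => mul_nonneg (abs_nonneg _) (sq_nonneg _)) ha5, ← hTdef, mul_assoc]

end AuxKey

lemma aux_eLpNorm_sq (f : ℝ → ℝ) :
    eLpNorm f 2 volume = (∫⁻ z, ENNReal.ofReal (f z ^ 2)) ^ (1/2 : ℝ) := by
  rw [eLpNorm_eq_lintegral_rpow_enorm_toReal (by norm_num) (by norm_num)]
  have h2 : (2 : ℝ≥0∞).toReal = 2 := by norm_num
  rw [h2]
  congr 1
  refine lintegral_congr fun z => ?_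
  rw [show (2 : ℝ) = ((2 : ℕ) : ℝ) by norm_num, ENNReal.rpow_natCast, enorm_eq_nnnorm, aux_ofReal_sq]

lemma aux_I_ne_top {w : ℝ → ℝ} (hw : MemLp w 2 volume) :
    (∫⁻ t, ENNReal.ofReal (w t ^ 2)) ≠ ⊤ := by
  have h2 := hw.integrable_sq.2
  have e : ∀ t : ℝ, ENNReal.ofReal (w t ^ 2) = (‖w t ^ 2‖₊ : ℝ≥0∞) := fun t => by
    rw [← enorm_eq_nnnorm, ← ofReal_norm_eq_enorm, Real.norm_eq_abs, abs_of_nonneg (sq_nonneg _)]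
  simp_rw [e]
  exact h2.ne


/-- Quantitative `L²` bound for `Δu`:
`∫ (Δu)² ≤ (∑|a_k|)(∑|a_k| k²) ‖u'‖²`, and in particular
`‖Δu‖_{L²} ≤ C ‖u'‖_{L²}` with `C` depending only on the coefficients. -/
theorem stmt_2 (a : ℤ → ℝ) (ha : CoeffH2 a) :
    (∀ (u : ℝ → ℝ) (A B : ℝ), ContDiff ℝ 1 u → MemLp (deriv u) 2 volume →
      Tendsto u atBot (nhds A) → Tendsto u atTop (nhds B) →
      (∫ z : ℝ, (deltaOp a u z) ^ 2) ≤
        (∑' k : ℤ, |a k|) * (∑' k : ℤ, |a k| * (k : ℝ) ^ 2) * ∫ z : ℝ, (deriv u z) ^ 2) ∧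
    ∃ C > (0:ℝ), ∀ (u : ℝ → ℝ) (A B : ℝ), ContDiff ℝ 1 u → MemLp (deriv u) 2 volume →
      Tendsto u atBot (nhds A) → Tendsto u atTop (nhds B) →
      L2norm (deltaOp a u) ≤ C * L2norm (deriv u) := by
  
  obtain ⟨ha1, ha2, ha3, ha4, ha5⟩ := ha
  have hS0 : 0 ≤ ∑' k : ℤ, |a k| := tsum_nonneg fun k => abs_nonneg _
  have hT0 : 0 ≤ ∑' k : ℤ, |a k| * (k : ℝ) ^ 2 :=
    tsum_nonneg fun k => mul_nonneg (abs_nonneg _) (sq_nonneg _)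
  constructor
  · intro u A B hu hv2 hA hB
    have key := aux_key a ⟨ha1, ha2, ha3, ha4, ha5⟩ u A B hu hA hB
    obtain ⟨C, hC0, hCb⟩ := aux_bounded hu.continuous hA hB
    have hdc : Continuous (deltaOp a u) := by
      refine continuous_tsum
        (fun k => continuous_const.mul (hu.continuous.comp (continuous_id.sub continuous_const)))
        (ha1.mul_right C) (fun k z => ?_)
      rw [norm_mul, Real.norm_eq_abs, Real.norm_eq_abs]
      exact mul_le_mul_of_nonneg_left (hCb _) (abs_nonneg _)
    have hvc : Continuous (deriv u) := hu.continuous_deriv le_rfl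
    have hInt : ∫ z : ℝ, (deltaOp a u z) ^ 2
        = (∫⁻ z, ENNReal.ofReal (deltaOp a u z ^ 2)).toReal :=
      integral_eq_lintegral_of_nonneg_ae (ae_of_all _ fun z => sq_nonneg _)
        ((hdc.pow 2).aestronglyMeasurable)
    have hIntv : ∫ z : ℝ, (deriv u z) ^ 2
        = (∫⁻ z, ENNReal.ofReal (deriv u z ^ 2)).toReal :=
      integral_eq_lintegral_of_nonneg_ae (ae_of_all _ fun z => sq_nonneg _)
        ((hvc.pow 2).aestronglyMeasurable)
    have hItop := aux_I_ne_top hv2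
    have hne : ENNReal.ofReal (∑' k : ℤ, |a k|)
        * ENNReal.ofReal (∑' k : ℤ, |a k| * (k : ℝ) ^ 2)
        * ∫⁻ t, ENNReal.ofReal (deriv u t ^ 2) ≠ ⊤ :=
      ENNReal.mul_ne_top (ENNReal.mul_ne_top ENNReal.ofReal_ne_top ENNReal.ofReal_ne_top) hItop
    rw [hInt, hIntv]
    calc (∫⁻ z, ENNReal.ofReal (deltaOp a u z ^ 2)).toReal
        ≤ (ENNReal.ofReal (∑' k : ℤ, |a k|)
            * ENNReal.ofReal (∑' k : ℤ, |a k| * (k : ℝ) ^ 2)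
            * ∫⁻ t, ENNReal.ofReal (deriv u t ^ 2)).toReal := ENNReal.toReal_mono hne key
      _ = (∑' k : ℤ, |a k|) * (∑' k : ℤ, |a k| * (k : ℝ) ^ 2)
            * (∫⁻ z, ENNReal.ofReal (deriv u z ^ 2)).toReal := by
          rw [ENNReal.toReal_mul, ENNReal.toReal_mul, ENNReal.toReal_ofReal hS0,
            ENNReal.toReal_ofReal hT0]
  · -- positivity of the constants
    have hSpos : 0 < ∑' k : ℤ, |a k| :=
      lt_of_lt_of_le (abs_pos.mpr (ne_of_lt ha3)) (Summable.le_tsum ha1 0 fun k _ => abs_nonneg _)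
    have hTpos : 0 < ∑' k : ℤ, |a k| * (k : ℝ) ^ 2 := by
      rcases hT0.lt_or_eq with h | h
      · exact h
      exfalso
      have hk0 : ∀ k : ℤ, k ≠ 0 → a k = 0 := by
        intro k hk
        have h1 : |a k| * (k : ℝ) ^ 2 ≤ ∑' k : ℤ, |a k| * (k : ℝ) ^ 2 :=
          Summable.le_tsum ha5 k fun j _ => mul_nonneg (abs_nonneg _) (sq_nonneg _)
        rw [← h] at h1
        have h3 : |a k| * (k : ℝ) ^ 2 = 0 :=
          le_antisymm h1 (mul_nonneg (abs_nonneg _) (sq_nonneg _))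
        have hk2 : ((k : ℝ)) ^ 2 ≠ 0 := pow_ne_zero _ (Int.cast_ne_zero.mpr hk)
        rcases mul_eq_zero.1 h3 with h4 | h4
        · exact abs_eq_zero.1 h4
        · exact absurd h4 hk2
      have hsingle : (∑' k : ℤ, a k) = a 0 := tsum_eq_single 0 fun k hk => hk0 k hk
      rw [ha2] at hsingle
      exact absurd hsingle.symm (ne_of_lt ha3)
    refine ⟨Real.sqrt ((∑' k : ℤ, |a k|) * (∑' k : ℤ, |a k| * (k : ℝ) ^ 2)),
      Real.sqrt_pos.2 (mul_pos hSpos hTpos), ?_⟩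
    intro u A B hu hv2 hA hB
    have key := aux_key a ⟨ha1, ha2, ha3, ha4, ha5⟩ u A B hu hA hB
    have hItop := aux_I_ne_top hv2
    have hST0 : 0 ≤ (∑' k : ℤ, |a k|) * (∑' k : ℤ, |a k| * (k : ℝ) ^ 2) :=
      mul_nonneg hS0 hT0
    have key' : (∫⁻ z, ENNReal.ofReal (deltaOp a u z ^ 2)) ≤
        ENNReal.ofReal ((∑' k : ℤ, |a k|) * (∑' k : ℤ, |a k| * (k : ℝ) ^ 2))
          * ∫⁻ t, ENNReal.ofReal (deriv u t ^ 2) := by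
      rw [ENNReal.ofReal_mul hS0]
      exact key
    rw [L2norm, L2norm, aux_eLpNorm_sq, aux_eLpNorm_sq]
    have h1 : (∫⁻ z, ENNReal.ofReal (deltaOp a u z ^ 2)) ^ (1/2 : ℝ) ≤
        (ENNReal.ofReal ((∑' k : ℤ, |a k|) * (∑' k : ℤ, |a k| * (k : ℝ) ^ 2))) ^ (1/2 : ℝ)
          * (∫⁻ t, ENNReal.ofReal (deriv u t ^ 2)) ^ (1/2 : ℝ) := by
      rw [← ENNReal.mul_rpow_of_nonneg _ _ (by norm_num : (0:ℝ) ≤ 1/2)]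
      exact ENNReal.rpow_le_rpow key' (by norm_num)
    have hne : (ENNReal.ofReal ((∑' k : ℤ, |a k|) * (∑' k : ℤ, |a k| * (k : ℝ) ^ 2))) ^ (1/2 : ℝ)
          * (∫⁻ t, ENNReal.ofReal (deriv u t ^ 2)) ^ (1/2 : ℝ) ≠ ⊤ :=
      ENNReal.mul_ne_top (ENNReal.rpow_ne_top_of_nonneg (by norm_num) ENNReal.ofReal_ne_top)
        (ENNReal.rpow_ne_top_of_nonneg (by norm_num) hItop)
    calc ((∫⁻ z, ENNReal.ofReal (deltaOp a u z ^ 2)) ^ (1/2 : ℝ)).toReal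
        ≤ ((ENNReal.ofReal ((∑' k : ℤ, |a k|) * (∑' k : ℤ, |a k| * (k : ℝ) ^ 2))) ^ (1/2 : ℝ)
            * (∫⁻ t, ENNReal.ofReal (deriv u t ^ 2)) ^ (1/2 : ℝ)).toReal :=
          ENNReal.toReal_mono hne h1
      _ = Real.sqrt ((∑' k : ℤ, |a k|) * (∑' k : ℤ, |a k| * (k : ℝ) ^ 2))
            * ((∫⁻ t, ENNReal.ofReal (deriv u t ^ 2)) ^ (1/2 : ℝ)).toReal := by
          rw [ENNReal.toReal_mul, ← ENNReal.toReal_rpow, ENNReal.toReal_ofReal hST0,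
            Real.sqrt_eq_rpow]
end

section
/- The derivative u₀' belongs to H²(ℝ), satisfies L⁰(u₀') = 0 (i.e. u₀''' + f'(u₀)·u₀' = 0 on ℝ), and every φ ∈ H²(ℝ) satisfying φ'' + f'(u₀)·φ = 0 is a scalar multiple of u₀'; that is, 0 is a simple eigenvalue of L⁰ with eigenfunction u₀'. -/
open MeasureTheory Filter Real

open Set

-- FTC derivative of primitive of continuous function
lemma primitive_hasDerivAt {f : ℝ → ℝ} (hf : Continuous f) (u : ℝ) :
    HasDerivAt (fun u => ∫ s in (0:ℝ)..u, f s) (f u) u :=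
  intervalIntegral.integral_hasDerivAt_right (hf.intervalIntegrable _ _)
    (hf.stronglyMeasurableAtFilter _ _) hf.continuousAt

-- integrable on ℝ of nonnegative derivative with limits at both ends
lemma myIntegrable {g g' : ℝ → ℝ} {l₁ l₂ : ℝ}
    (hderiv : ∀ x, HasDerivAt g (g' x) x) (hpos : ∀ x, 0 ≤ g' x)
    (hbot : Tendsto g atBot (nhds l₁)) (htop : Tendsto g atTop (nhds l₂)) :
    Integrable g' := by
  have hIoi : IntegrableOn g' (Ioi 0) :=
    integrableOn_Ioi_deriv_of_nonneg' (fun x _ => hderiv x) (fun x _ => hpos x) htop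
  have hneg : IntegrableOn (fun x => g' (-x)) (Ioi 0) := by
    have hd : ∀ x ∈ Ici (0:ℝ), HasDerivAt (fun x => -g (-x)) (g' (-x)) x := by
      intro x _
      have := ((hderiv (-x)).comp x (hasDerivAt_neg x)).neg
      exact this.congr_deriv (by ring)
    have ht : Tendsto (fun x => -g (-x)) atTop (nhds (-l₁)) :=
      (hbot.comp tendsto_neg_atTop_atBot).neg
    exact integrableOn_Ioi_deriv_of_nonneg' hd (fun x _ => hpos (-x)) ht
  have hIio : IntegrableOn g' (Iio 0) := by
    have := (MeasurePreserving.integrableOn_comp_preimage (Measure.measurePreserving_neg volume)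
      (Homeomorph.neg ℝ).measurableEmbedding).2 hneg
    have hs : (fun x : ℝ => -x) ⁻¹' (Ioi 0) = Iio 0 := by ext x; simp
    rw [hs] at this
    exact this.congr_fun (fun x _ => by simp [Function.comp]) measurableSet_Iio
  have h0 : IntegrableOn g' {(0:ℝ)} := by
    apply (integrableOn_singleton_iff (by simp)).2; right; simp
  have : IntegrableOn g' (Iio 0 ∪ {0} ∪ Ioi 0) := (hIio.union h0).union hIoi
  rwa [show (Iio (0:ℝ) ∪ {0} ∪ Ioi 0) = univ by ext x; rcases lt_trichotomy x 0 with h|h|h <;> simp [h],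
    integrableOn_univ] at this

noncomputable def Fprim (f : ℝ → ℝ) (u : ℝ) : ℝ := ∫ s in (0:ℝ)..u, f s

section core
variable {f u₀ : ℝ → ℝ}

lemma range01 (hu₀ : IsHeteroclinic f u₀) (hmono : ∀ z : ℝ, 0 < deriv u₀ z) :
    ∀ z, u₀ z ∈ Set.Ioo (0:ℝ) 1 := by
  have hsm : StrictMono u₀ := strictMono_of_deriv_pos hmono
  intro z
  constructor
  · have h1 : u₀ (z - 1) < u₀ z := hsm (by linarith)
    have h2 : (0:ℝ) ≤ u₀ (z-1) := by
      refine le_of_tendsto hu₀.2.2.1 ?_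
      filter_upwards [eventually_le_atBot (z-1)] with x hx
      exact (hsm.le_iff_le).2 hx
    linarith
  · have h1 : u₀ z < u₀ (z + 1) := hsm (by linarith)
    have h2 : u₀ (z+1) ≤ 1 := by
      refine ge_of_tendsto hu₀.2.2.2 ?_
      filter_upwards [eventually_ge_atTop (z+1)] with x hx
      exact (hsm.le_iff_le).2 hx
    linarith

end core

section core
variable {f u₀ : ℝ → ℝ}

lemma u0_hasDeriv (hu₀ : IsHeteroclinic f u₀) : ∀ z, HasDerivAt u₀ (deriv u₀ z) z :=
  fun z => ((hu₀.1.differentiable two_ne_zero) z).hasDerivAt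

lemma u0_deriv_diff (hu₀ : IsHeteroclinic f u₀) : Differentiable ℝ (deriv u₀) := by
  have h2 : ContDiff ℝ (1 + 1 : WithTop ℕ∞) u₀ := by
    have := hu₀.1
    norm_num at this ⊢
    exact this
  rw [contDiff_succ_iff_deriv] at h2
  exact h2.2.2.differentiable one_ne_zero

lemma energy (hf : NonlinH1 f) (hu₀ : IsHeteroclinic f u₀) (hmono : ∀ z : ℝ, 0 < deriv u₀ z) :
    ∀ z, (deriv u₀ z)^2 = -2 * Fprim f (u₀ z) := by
  have hfc : Continuous f := hf.1.continuous
  have hF : ∀ u, HasDerivAt (Fprim f) (f u) u := primitive_hasDerivAt hfc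
  have hd1 := u0_hasDeriv hu₀
  have hd2 : ∀ z, HasDerivAt (deriv u₀) (deriv (deriv u₀) z) z :=
    fun z => (u0_deriv_diff hu₀ z).hasDerivAt
  obtain ⟨E, hEdef⟩ : ∃ E : ℝ → ℝ, E = fun z => (deriv u₀ z)^2 + 2 * Fprim f (u₀ z) := ⟨_, rfl⟩
  have hE : ∀ z, HasDerivAt E 0 z := by
    intro z
    have h1 : HasDerivAt (fun z => (deriv u₀ z)^2)
        (2 * deriv u₀ z * deriv (deriv u₀) z) z := by
      have := (hd2 z).pow 2
      exact this.congr_deriv (by norm_num)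
    have h2 : HasDerivAt (fun z => Fprim f (u₀ z)) (f (u₀ z) * deriv u₀ z) z :=
      (hF (u₀ z)).comp z (hd1 z)
    have h3 := h1.add (h2.const_mul 2)
    have h4 := hu₀.2.1 z
    rw [hEdef]
    refine h3.congr_deriv (Eq.symm ?_)
    linear_combination (-2 * deriv u₀ z) * h4
  have hconst : ∀ z, E z = E 0 := fun z =>
    is_const_of_deriv_eq_zero (fun x => (hE x).differentiableAt) (fun x => (hE x).deriv) z 0
  have hFc : Continuous (Fprim f) := by
    rw [continuous_iff_continuousAt]; exact fun u => (hF u).continuousAt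
  have hF0 : Fprim f 0 = 0 := intervalIntegral.integral_same
  have htF : Tendsto (fun z => (deriv u₀ z)^2) atBot (nhds (E 0)) := by
    have h1 : Tendsto (fun z => Fprim f (u₀ z)) atBot (nhds 0) := by
      have := (hFc.tendsto 0).comp hu₀.2.2.1
      rwa [hF0] at this
    have h2 : Tendsto (fun z => E z - 2 * Fprim f (u₀ z)) atBot (nhds (E 0 - 2 * 0)) := by
      apply Tendsto.sub _ (h1.const_mul 2)
      exact tendsto_const_nhds.congr (fun z => (hconst z).symm)
    rw [hEdef] at h2 ⊢
    simpa using h2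
  have hE0nonneg : 0 ≤ E 0 := ge_of_tendsto htF (Eventually.of_forall fun z => sq_nonneg _)
  have hE0nonpos : E 0 ≤ 0 := by
    by_contra hpos
    push_neg at hpos
    have hev : ∀ᶠ z in atBot, E 0 / 2 < (deriv u₀ z)^2 :=
      htF.eventually (eventually_gt_nhds (half_lt_self hpos))
    obtain ⟨a, ha⟩ := hev.exists_forall_of_atBot
    obtain ⟨d, hd⟩ : ∃ d, d = Real.sqrt (E 0 / 2) := ⟨_, rfl⟩
    have hdpos : 0 < d := hd ▸ Real.sqrt_pos.2 (half_pos hpos)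
    have hge : ∀ z ∈ interior (Iic a), d ≤ deriv u₀ z := by
      intro z hz
      rw [interior_Iic] at hz
      have h1 := ha z (le_of_lt hz)
      calc d ≤ Real.sqrt ((deriv u₀ z)^2) := hd ▸ Real.sqrt_le_sqrt h1.le
      _ = deriv u₀ z := by rw [Real.sqrt_sq (hmono z).le]
    obtain ⟨z, hz⟩ : ∃ z, z = a - (u₀ a)/d - 1 := ⟨_, rfl⟩
    have hza : z ≤ a := by
      have := (range01 hu₀ hmono a).1
      have : 0 < (u₀ a)/d := div_pos this hdpos
      linarith
    have hmv : d * (a - z) ≤ u₀ a - u₀ z := by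
      apply (convex_Iic a).mul_sub_le_image_sub_of_le_deriv
        (hu₀.1.continuous.continuousOn)
        ((hu₀.1.differentiable two_ne_zero).differentiableOn) hge z (mem_Iic.2 hza) a (mem_Iic.2 le_rfl) hza
    have hu0z : 0 < u₀ z := (range01 hu₀ hmono z).1
    have : d * (a - z) = u₀ a + d := by
      rw [hz]; field_simp; ring
    linarith
  have hE0 : E 0 = 0 := le_antisymm hE0nonpos hE0nonneg
  intro z
  have := hconst z
  rw [hE0] at this
  rw [hEdef] at this
  simp only at this
  linarith

lemma Fneg (hf : NonlinH1 f) (hu₀ : IsHeteroclinic f u₀) (hmono : ∀ z : ℝ, 0 < deriv u₀ z) :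
    ∀ u ∈ Ioo (0:ℝ) 1, Fprim f u < 0 := by
  intro u hu
  obtain ⟨a, ha⟩ := ((tendsto_order.1 hu₀.2.2.1).2 u hu.1).exists
  obtain ⟨b, hb⟩ := ((tendsto_order.1 hu₀.2.2.2).1 u hu.2).exists
  have hsm : StrictMono u₀ := strictMono_of_deriv_pos hmono
  have hab : a ≤ b := by
    by_contra h
    push_neg at h
    have := hsm h
    linarith
  have : u ∈ u₀ '' Icc a b := by
    apply intermediate_value_Icc hab hu₀.1.continuous.continuousOn
    exact ⟨ha.le, hb.le⟩
  obtain ⟨z, _, hzu⟩ := this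
  have := energy hf hu₀ hmono z
  rw [hzu] at this
  nlinarith [hmono z]

end core

lemma deriv_cont {g : ℝ → ℝ} (h : ContDiff ℝ 2 g) : Continuous (deriv g) := by
  have h2 : ContDiff ℝ (1 + 1 : WithTop ℕ∞) g := by norm_num at h ⊢; exact h
  rw [contDiff_succ_iff_deriv] at h2
  exact h2.2.2.continuous

section core2
variable {f u₀ : ℝ → ℝ}

set_option maxHeartbeats 2000000 in
lemma fbound (hf : NonlinH1 f) (hu₀ : IsHeteroclinic f u₀) (hmono : ∀ z : ℝ, 0 < deriv u₀ z) :
    ∃ C : ℝ, 0 ≤ C ∧ ∀ u ∈ Icc (0:ℝ) 1, |f u| ≤ C * Real.sqrt (-2 * Fprim f u) := by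
  have hFneg := Fneg hf hu₀ hmono
  obtain ⟨hC2, hf0, hf1, hdf0, hdf1, hF1, hFne⟩ := hf
  have hfc : Continuous f := hC2.continuous
  have hfd : Differentiable ℝ f := hC2.differentiable two_ne_zero
  have hf'c : Continuous (deriv f) := deriv_cont hC2
  -- near 0
  obtain ⟨ε₀, hε₀pos, hε₀⟩ :
      ∃ ε > (0:ℝ), ∀ x ∈ Icc (0:ℝ) ε, |deriv f x - deriv f 0| ≤ -(deriv f 0) / 2 := by
    obtain ⟨δ, hδ, hδ'⟩ := Metric.continuousAt_iff.1 hf'c.continuousAt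
      (ε := -(deriv f 0) / 2) (by linarith)
    refine ⟨δ/2, by linarith, fun x hx => ?_⟩
    have hd : dist x 0 < δ := by
      rw [Real.dist_eq, sub_zero, abs_of_nonneg hx.1]; linarith [hx.2]
    have := hδ' hd
    rw [Real.dist_eq] at this
    linarith [this]
  have hub0 : ∀ x ∈ Icc (0:ℝ) ε₀, deriv f x ≤ deriv f 0 / 2 := fun x hx => by
    have := (abs_le.1 (hε₀ x hx)).2; linarith
  have hlb0 : ∀ x ∈ Icc (0:ℝ) ε₀, 3/2 * deriv f 0 ≤ deriv f x := fun x hx => by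
    have := (abs_le.1 (hε₀ x hx)).1; linarith
  have hfu_ub0 : ∀ u ∈ Icc (0:ℝ) ε₀, f u ≤ deriv f 0 / 2 * u := fun u hu => by
    have h := (convex_Icc 0 ε₀).image_sub_le_mul_sub_of_deriv_le hfc.continuousOn
      hfd.differentiableOn (fun x hx => hub0 x (interior_subset hx))
      0 (left_mem_Icc.2 hε₀pos.le) u hu hu.1
    simpa [hf0] using h
  have hfu_lb0 : ∀ u ∈ Icc (0:ℝ) ε₀, 3/2 * deriv f 0 * u ≤ f u := fun u hu => by
    have h := (convex_Icc 0 ε₀).mul_sub_le_image_sub_of_le_deriv hfc.continuousOn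
      hfd.differentiableOn (fun x hx => hlb0 x (interior_subset hx))
      0 (left_mem_Icc.2 hε₀pos.le) u hu hu.1
    simp only [hf0, sub_zero] at h
    linarith
  have hFub0 : ∀ u ∈ Icc (0:ℝ) ε₀, Fprim f u ≤ deriv f 0 / 4 * u^2 := fun u hu => by
    have h := intervalIntegral.integral_mono_on (μ := volume) hu.1
      (hfc.intervalIntegrable 0 u)
      ((continuous_const.mul continuous_id').intervalIntegrable 0 u)
      (fun s hs => hfu_ub0 s ⟨hs.1, le_trans hs.2 hu.2⟩)
    simp only [Pi.mul_apply] at h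
    rw [intervalIntegral.integral_const_mul] at h
    simp only [integral_id] at h
    unfold Fprim
    convert h using 1 <;> ring_nf
  -- near 1
  obtain ⟨ε₁, hε₁pos, hε₁⟩ :
      ∃ ε > (0:ℝ), ∀ x ∈ Icc (1-ε) 1, |deriv f x - deriv f 1| ≤ -(deriv f 1) / 2 := by
    obtain ⟨δ, hδ, hδ'⟩ := Metric.continuousAt_iff.1 (hf'c.continuousAt (x := 1))
      (ε := -(deriv f 1) / 2) (by linarith)
    refine ⟨δ/2, by linarith, fun x hx => ?_⟩
    have hd : dist x 1 < δ := by
      rw [Real.dist_eq, abs_of_nonpos (by linarith [hx.2])]; linarith [hx.1]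
    have := hδ' hd
    rw [Real.dist_eq] at this
    linarith [this]
  have hub1 : ∀ x ∈ Icc (1-ε₁) 1, deriv f x ≤ deriv f 1 / 2 := fun x hx => by
    have := (abs_le.1 (hε₁ x hx)).2; linarith
  have hlb1 : ∀ x ∈ Icc (1-ε₁) 1, 3/2 * deriv f 1 ≤ deriv f x := fun x hx => by
    have := (abs_le.1 (hε₁ x hx)).1; linarith
  have hfu_lb1 : ∀ u ∈ Icc (1-ε₁) 1, -(deriv f 1) / 2 * (1 - u) ≤ f u := fun u hu => by
    have h := (convex_Icc (1-ε₁) 1).image_sub_le_mul_sub_of_deriv_le hfc.continuousOn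
      hfd.differentiableOn (fun x hx => hub1 x (interior_subset hx))
      u hu 1 (right_mem_Icc.2 (by linarith)) hu.2
    simp only [hf1] at h
    linarith
  have hfu_ub1 : ∀ u ∈ Icc (1-ε₁) 1, f u ≤ -(3/2 * deriv f 1) * (1 - u) := fun u hu => by
    have h := (convex_Icc (1-ε₁) 1).mul_sub_le_image_sub_of_le_deriv hfc.continuousOn
      hfd.differentiableOn (fun x hx => hlb1 x (interior_subset hx))
      u hu 1 (right_mem_Icc.2 (by linarith)) hu.2
    simp only [hf1] at h
    linarith
  have hFub1 : ∀ u ∈ Icc (1-ε₁) 1, -(Fprim f u) ≥ -(deriv f 1) / 4 * (1-u)^2 := fun u hu => by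
    have hsub : Fprim f 1 - Fprim f u = ∫ s in u..(1:ℝ), f s :=
      intervalIntegral.integral_interval_sub_left (hfc.intervalIntegrable 0 1)
        (hfc.intervalIntegrable 0 u)
    have h := intervalIntegral.integral_mono_on (μ := volume) hu.2
      ((continuous_const.mul (continuous_const.sub continuous_id')).intervalIntegrable u 1)
      (hfc.intervalIntegrable u 1)
      (fun s hs => hfu_lb1 s ⟨le_trans hu.1 hs.1, hs.2⟩)
    have hcomp : (∫ s in u..(1:ℝ), -(deriv f 1) / 2 * (1 - s))
        = -(deriv f 1) / 2 * ((1-u)^2/2) := by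
      rw [intervalIntegral.integral_const_mul]
      rw [intervalIntegral.integral_sub (intervalIntegrable_const) (continuous_id'.intervalIntegrable u 1)]
      simp only [intervalIntegral.integral_const, integral_id, smul_eq_mul]
      ring
    simp only [Pi.mul_apply, Pi.sub_apply] at h
    rw [hcomp] at h
    rw [show Fprim f 1 = 0 from hF1, zero_sub] at hsub
    unfold Fprim
    rw [show -(∫ s in (0:ℝ)..u, f s) = ∫ s in u..(1:ℝ), f s from hsub]
    nlinarith [h]
  -- middle region
  have hFc : Continuous (Fprim f) := by
    rw [continuous_iff_continuousAt]
    exact fun u => (primitive_hasDerivAt hfc u).continuousAt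
  obtain ⟨A, hA⟩ : ∃ A : ℝ, A = min ε₀ (1/2) := ⟨_, rfl⟩
  obtain ⟨B, hB⟩ : ∃ B : ℝ, B = 1 - min ε₁ (1/2) := ⟨_, rfl⟩
  have hApos : 0 < A := by rw [hA]; exact lt_min hε₀pos (by norm_num)
  have hAle : A ≤ ε₀ := by rw [hA]; exact min_le_left _ _
  have hAhalf : A ≤ 1/2 := by rw [hA]; exact min_le_right _ _
  have hBlt : B < 1 := by
    rw [hB]; have : 0 < min ε₁ (1/2) := lt_min hε₁pos (by norm_num); linarith
  have hBge : 1 - ε₁ ≤ B := by rw [hB]; have := min_le_left ε₁ (1/2); linarith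
  have hBhalf : 1/2 ≤ B := by rw [hB]; have := min_le_right ε₁ (1/2); linarith
  have hAB : A ≤ B := by linarith
  obtain ⟨umin, humin, hmin⟩ := isCompact_Icc.exists_isMinOn (Set.nonempty_Icc.2 hAB)
    ((continuous_const.mul hFc : Continuous fun x => (-2:ℝ) * Fprim f x).continuousOn)
  obtain ⟨δ, hδ⟩ : ∃ d : ℝ, d = -2 * Fprim f umin := ⟨_, rfl⟩
  have hδpos : 0 < δ := by
    rw [hδ]
    have := hFneg umin ⟨lt_of_lt_of_le hApos humin.1, lt_of_le_of_lt humin.2 hBlt⟩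
    linarith
  obtain ⟨M, hM⟩ := isCompact_Icc.exists_bound_of_continuousOn
    (hfc.continuousOn (s := Icc (0:ℝ) 1))
  have hMnonneg : 0 ≤ M := le_trans (norm_nonneg _) (hM 0 ⟨le_rfl, by norm_num⟩)
  obtain ⟨c0, hc0⟩ : ∃ c : ℝ, c = Real.sqrt (-(deriv f 0)/2) := ⟨_, rfl⟩
  obtain ⟨c1, hc1⟩ : ∃ c : ℝ, c = Real.sqrt (-(deriv f 1)/2) := ⟨_, rfl⟩
  have hc0pos : 0 < c0 := by rw [hc0]; exact Real.sqrt_pos.2 (by linarith)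
  have hc1pos : 0 < c1 := by rw [hc1]; exact Real.sqrt_pos.2 (by linarith)
  have hc0sq : c0^2 = -(deriv f 0)/2 := by rw [hc0]; exact Real.sq_sqrt (by linarith)
  have hc1sq : c1^2 = -(deriv f 1)/2 := by rw [hc1]; exact Real.sq_sqrt (by linarith)
  have hδsqpos : 0 < Real.sqrt δ := Real.sqrt_pos.2 hδpos
  obtain ⟨C, hC⟩ : ∃ C : ℝ,
      C = max (-(3/2 * deriv f 0) / c0) (max (-(3/2 * deriv f 1) / c1) (M / Real.sqrt δ)) :=
    ⟨_, rfl⟩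
  have hCge0 : 0 ≤ -(3/2 * deriv f 0) / c0 := le_of_lt (div_pos (by linarith) hc0pos)
  have hCge1 : 0 ≤ -(3/2 * deriv f 1) / c1 := le_of_lt (div_pos (by linarith) hc1pos)
  have hCgeM : 0 ≤ M / Real.sqrt δ := div_nonneg hMnonneg hδsqpos.le
  have hCnn : 0 ≤ C := by rw [hC]; exact le_trans hCge0 (le_max_left _ _)
  have hC0le : -(3/2 * deriv f 0) / c0 ≤ C := by rw [hC]; exact le_max_left _ _
  have hC1le : -(3/2 * deriv f 1) / c1 ≤ C := by
    rw [hC]; exact le_trans (le_max_left _ _) (le_max_right _ _)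
  have hCMle : M / Real.sqrt δ ≤ C := by
    rw [hC]; exact le_trans (le_max_right _ _) (le_max_right _ _)
  refine ⟨C, hCnn, fun u hu => ?_⟩
  have hsqnn : 0 ≤ Real.sqrt (-2 * Fprim f u) := Real.sqrt_nonneg _
  rcases le_or_gt u A with hcase0 | hcase0'
  · -- near 0
    have hu0 : u ∈ Icc (0:ℝ) ε₀ := ⟨hu.1, le_trans hcase0 hAle⟩
    have h1 : |f u| ≤ -(3/2 * deriv f 0) * u := by
      refine abs_le.2 ⟨by linarith [hfu_lb0 u hu0], ?_⟩
      nlinarith [hfu_ub0 u hu0, hu.1, hdf0]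
    have h2 : (c0 * u)^2 ≤ -2 * Fprim f u := by
      nlinarith [hFub0 u hu0, hc0sq, sq_nonneg u]
    have h3 : c0 * u ≤ Real.sqrt (-2 * Fprim f u) := by
      have := Real.sqrt_le_sqrt h2
      rwa [Real.sqrt_sq (mul_nonneg hc0pos.le hu.1)] at this
    calc |f u| ≤ -(3/2 * deriv f 0) * u := h1
      _ = (-(3/2 * deriv f 0) / c0) * (c0 * u) := by field_simp
      _ ≤ (-(3/2 * deriv f 0) / c0) * Real.sqrt (-2 * Fprim f u) :=
          mul_le_mul_of_nonneg_left h3 hCge0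
      _ ≤ C * Real.sqrt (-2 * Fprim f u) := mul_le_mul_of_nonneg_right hC0le hsqnn
  rcases le_or_gt B u with hcase1 | hcase1'
  · -- near 1
    have hu1 : u ∈ Icc (1-ε₁) 1 := ⟨le_trans hBge hcase1, hu.2⟩
    have h1 : |f u| ≤ -(3/2 * deriv f 1) * (1 - u) := by
      refine abs_le.2 ⟨?_, hfu_ub1 u hu1⟩
      nlinarith [hfu_lb1 u hu1, hdf1, hu.2]
    have h2 : (c1 * (1 - u))^2 ≤ -2 * Fprim f u := by
      nlinarith [hFub1 u hu1, hc1sq, sq_nonneg (1-u)]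
    have h3 : c1 * (1 - u) ≤ Real.sqrt (-2 * Fprim f u) := by
      have := Real.sqrt_le_sqrt h2
      rwa [Real.sqrt_sq (mul_nonneg hc1pos.le (by linarith [hu.2]))] at this
    calc |f u| ≤ -(3/2 * deriv f 1) * (1 - u) := h1
      _ = (-(3/2 * deriv f 1) / c1) * (c1 * (1 - u)) := by field_simp
      _ ≤ (-(3/2 * deriv f 1) / c1) * Real.sqrt (-2 * Fprim f u) :=
          mul_le_mul_of_nonneg_left h3 hCge1
      _ ≤ C * Real.sqrt (-2 * Fprim f u) := mul_le_mul_of_nonneg_right hC1le hsqnn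
  · -- middle
    have humem : u ∈ Icc A B := ⟨hcase0'.le, hcase1'.le⟩
    have hFmin : δ ≤ -2 * Fprim f u := by rw [hδ]; exact hmin humem
    have h3 : Real.sqrt δ ≤ Real.sqrt (-2 * Fprim f u) := Real.sqrt_le_sqrt hFmin
    have h1 : |f u| ≤ M := by
      have := hM u hu; rwa [Real.norm_eq_abs] at this
    calc |f u| ≤ M := h1
      _ = (M / Real.sqrt δ) * Real.sqrt δ := by field_simp
      _ ≤ (M / Real.sqrt δ) * Real.sqrt (-2 * Fprim f u) :=
          mul_le_mul_of_nonneg_left h3 hCgeM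
      _ ≤ C * Real.sqrt (-2 * Fprim f u) := mul_le_mul_of_nonneg_right hCMle hsqnn

end core2

section core3
variable {f u₀ : ℝ → ℝ}

lemma u0d_integrable (hu₀ : IsHeteroclinic f u₀) (hmono : ∀ z : ℝ, 0 < deriv u₀ z) :
    Integrable (deriv u₀) :=
  myIntegrable (u0_hasDeriv hu₀) (fun z => (hmono z).le) hu₀.2.2.1 hu₀.2.2.2

lemma sqrt_energy (hf : NonlinH1 f) (hu₀ : IsHeteroclinic f u₀)
    (hmono : ∀ z : ℝ, 0 < deriv u₀ z) :
    ∀ z, Real.sqrt (-2 * Fprim f (u₀ z)) = deriv u₀ z := by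
  intro z
  rw [← energy hf hu₀ hmono z, Real.sqrt_sq (hmono z).le]

lemma u0dsq_integrable (hf : NonlinH1 f) (hu₀ : IsHeteroclinic f u₀)
    (hmono : ∀ z : ℝ, 0 < deriv u₀ z) :
    Integrable (fun z => (deriv u₀ z)^2) := by
  have hfc : Continuous f := hf.1.continuous
  have hFc : Continuous (Fprim f) := by
    rw [continuous_iff_continuousAt]
    exact fun u => (primitive_hasDerivAt hfc u).continuousAt
  have hgc : Continuous (fun u => Real.sqrt (-2 * Fprim f u)) :=
    (continuous_const.mul hFc).sqrt
  have hG : ∀ u, HasDerivAt (fun u => ∫ s in (0:ℝ)..u, Real.sqrt (-2 * Fprim f s))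
      (Real.sqrt (-2 * Fprim f u)) u := primitive_hasDerivAt hgc
  have hGc : Continuous (fun u => ∫ s in (0:ℝ)..u, Real.sqrt (-2 * Fprim f s)) := by
    rw [continuous_iff_continuousAt]
    exact fun u => (hG u).continuousAt
  have hH : ∀ z, HasDerivAt (fun z => ∫ s in (0:ℝ)..(u₀ z), Real.sqrt (-2 * Fprim f s))
      ((deriv u₀ z)^2) z := by
    intro z
    have := (hG (u₀ z)).comp z (u0_hasDeriv hu₀ z)
    rwa [sqrt_energy hf hu₀ hmono z, ← sq] at this
  exact myIntegrable hH (fun z => sq_nonneg _)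
    ((hGc.tendsto 0).comp hu₀.2.2.1) ((hGc.tendsto 1).comp hu₀.2.2.2)

lemma u0dd_eq (hu₀ : IsHeteroclinic f u₀) : deriv (deriv u₀) = fun z => -f (u₀ z) := by
  funext z
  have := hu₀.2.1 z
  linarith

lemma u0ddd_eq (hf : NonlinH1 f) (hu₀ : IsHeteroclinic f u₀) :
    ∀ z, HasDerivAt (deriv (deriv u₀)) (-(deriv f (u₀ z) * deriv u₀ z)) z := by
  intro z
  rw [u0dd_eq hu₀]
  have hfd : ∀ u, HasDerivAt f (deriv f u) u :=
    fun u => ((hf.1.differentiable two_ne_zero) u).hasDerivAt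
  exact (((hfd (u₀ z)).comp z (u0_hasDeriv hu₀ z))).neg

lemma memH2 (hf : NonlinH1 f) (hu₀ : IsHeteroclinic f u₀)
    (hmono : ∀ z : ℝ, 0 < deriv u₀ z) : MemH2R (deriv u₀) := by
  have hd1c : Continuous (deriv u₀) := deriv_cont hu₀.1
  have hfc : Continuous f := hf.1.continuous
  have hsq := u0dsq_integrable hf hu₀ hmono
  have hdd_eq := u0dd_eq hu₀
  have hddc : Continuous (deriv (deriv u₀)) := by
    rw [hdd_eq]; exact (hfc.comp hu₀.1.continuous).neg
  have hddd_eq : deriv (deriv (deriv u₀)) = fun z => -(deriv f (u₀ z) * deriv u₀ z) :=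
    funext fun z => (u0ddd_eq hf hu₀ z).deriv
  have hdddc : Continuous (deriv (deriv (deriv u₀))) := by
    rw [hddd_eq]
    exact ((deriv_cont hf.1).comp hu₀.1.continuous |>.mul hd1c).neg
  obtain ⟨C, hCnn, hC⟩ := fbound hf hu₀ hmono
  have hbd : ∀ z, |f (u₀ z)| ≤ C * deriv u₀ z := by
    intro z
    have hmem := range01 hu₀ hmono z
    have := hC (u₀ z) ⟨hmem.1.le, hmem.2.le⟩
    rwa [sqrt_energy hf hu₀ hmono z] at this
  -- integrability of (f ∘ u₀)^2
  have hsq2 : Integrable (fun z => (f (u₀ z))^2) := by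
    refine Integrable.mono' (hsq.const_mul (C^2))
      (((hfc.comp hu₀.1.continuous).pow 2).aestronglyMeasurable) ?_
    refine Eventually.of_forall fun z => ?_
    have h1 := hbd z
    have h2 : (0:ℝ) ≤ C * deriv u₀ z := mul_nonneg hCnn (hmono z).le
    rw [Real.norm_eq_abs, abs_of_nonneg (sq_nonneg _)]
    nlinarith [abs_nonneg (f (u₀ z)), sq_abs (f (u₀ z))]
  -- integrability of (f'(u₀) u₀')^2
  obtain ⟨M, hM⟩ := isCompact_Icc.exists_bound_of_continuousOn
    ((deriv_cont hf.1).continuousOn (s := Icc (0:ℝ) 1))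
  have hsq3 : Integrable (fun z => (deriv f (u₀ z) * deriv u₀ z)^2) := by
    refine Integrable.mono' (hsq.const_mul (M^2))
      (((((deriv_cont hf.1).comp hu₀.1.continuous).mul hd1c).pow 2).aestronglyMeasurable) ?_
    refine Eventually.of_forall fun z => ?_
    have hmem := range01 hu₀ hmono z
    have h1 := hM (u₀ z) ⟨hmem.1.le, hmem.2.le⟩
    rw [Real.norm_eq_abs] at h1
    rw [Real.norm_eq_abs, abs_of_nonneg (sq_nonneg _)]
    have h2 : (deriv f (u₀ z))^2 ≤ M^2 := by
      nlinarith [sq_abs (deriv f (u₀ z)), abs_nonneg (deriv f (u₀ z))]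
    nlinarith [sq_nonneg (deriv u₀ z), mul_nonneg (sub_nonneg.2 h2) (sq_nonneg (deriv u₀ z))]
  refine ⟨u0_deriv_diff hu₀, ?_, ?_, ?_, ?_⟩
  · rw [hdd_eq]
    exact ((hf.1.differentiable two_ne_zero).comp (hu₀.1.differentiable two_ne_zero)).neg
  · exact (memLp_two_iff_integrable_sq hd1c.aestronglyMeasurable).2 (by simpa [sq] using hsq)
  · refine (memLp_two_iff_integrable_sq hddc.aestronglyMeasurable).2 ?_
    have : (fun z => deriv (deriv u₀) z ^ 2) = fun z => (f (u₀ z))^2 := by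
      rw [hdd_eq]; funext z; ring
    rw [this]
    exact hsq2
  · refine (memLp_two_iff_integrable_sq hdddc.aestronglyMeasurable).2 ?_
    have : (fun z => deriv (deriv (deriv u₀)) z ^ 2) = fun z => (deriv f (u₀ z) * deriv u₀ z)^2 := by
      rw [hddd_eq]; funext z; ring
    rw [this]
    exact hsq3

end core3

lemma abs_mul_le_half (a b : ℝ) : |a * b| ≤ 1/2 * (a^2 + b^2) := by
  rw [abs_mul]
  nlinarith [sq_nonneg (|a| - |b|), sq_abs a, sq_abs b, abs_nonneg a, abs_nonneg b]

section core4
variable {f u₀ : ℝ → ℝ}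

lemma simple_ev (hf : NonlinH1 f) (hu₀ : IsHeteroclinic f u₀)
    (hmono : ∀ z : ℝ, 0 < deriv u₀ z) (φ : ℝ → ℝ) (hφ : MemH2R φ)
    (hode : ∀ z : ℝ, deriv (deriv φ) z + deriv f (u₀ z) * φ z = 0) :
    ∃ c : ℝ, ∀ z : ℝ, φ z = c * deriv u₀ z := by
  obtain ⟨hφd, hφdd, hφL2, hφdL2, _⟩ := hφ
  have hd1 := u0_hasDeriv hu₀
  have hu0dd := u0_deriv_diff hu₀
  have hd1c : Continuous (deriv u₀) := deriv_cont hu₀.1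
  have hφc : Continuous φ := hφd.continuous
  have hφdc : Continuous (deriv φ) := hφdd.continuous
  have hu0ddc : Continuous (deriv (deriv u₀)) := by
    rw [u0dd_eq hu₀]; exact (hf.1.continuous.comp hu₀.1.continuous).neg
  obtain ⟨W, hW⟩ : ∃ W : ℝ → ℝ,
      W = fun z => deriv φ z * deriv u₀ z - φ z * deriv (deriv u₀) z := ⟨_, rfl⟩
  have hWd : ∀ z, HasDerivAt W 0 z := by
    intro z
    rw [hW]
    have h1 : HasDerivAt (fun z => deriv φ z * deriv u₀ z)
        (deriv (deriv φ) z * deriv u₀ z + deriv φ z * deriv (deriv u₀) z) z :=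
      (hφdd z).hasDerivAt.mul (hu0dd z).hasDerivAt
    have h2 : HasDerivAt (fun z => φ z * deriv (deriv u₀) z)
        (deriv φ z * deriv (deriv u₀) z + φ z * (-(deriv f (u₀ z) * deriv u₀ z))) z :=
      (hφd z).hasDerivAt.mul (u0ddd_eq hf hu₀ z)
    have h3 := h1.sub h2
    refine h3.congr_deriv (Eq.symm ?_)
    have h4 := hode z
    linear_combination (-(deriv u₀ z)) * h4
  have hWconst : ∀ z, W z = W 0 := fun z =>
    is_const_of_deriv_eq_zero (fun x => (hWd x).differentiableAt)
      (fun x => (hWd x).deriv) z 0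
  have hu0dsq : Integrable (fun z => (deriv u₀ z)^2) := u0dsq_integrable hf hu₀ hmono
  have hu0ddsq : Integrable (fun z => (deriv (deriv u₀) z)^2) := by
    have h := (memH2 hf hu₀ hmono).2.2.2.1
    have := (memLp_two_iff_integrable_sq hu0ddc.aestronglyMeasurable).1 h
    simpa [sq] using this
  have hφsq : Integrable (fun z => (φ z)^2) :=
    (memLp_two_iff_integrable_sq hφc.aestronglyMeasurable).1 hφL2
  have hφdsq : Integrable (fun z => (deriv φ z)^2) :=
    (memLp_two_iff_integrable_sq hφdc.aestronglyMeasurable).1 hφdL2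
  have hWint : Integrable W := by
    rw [hW]
    apply Integrable.sub
    · refine Integrable.mono' ((hφdsq.add hu0dsq).const_mul (1/2))
        ((hφdc.mul hd1c).aestronglyMeasurable) (Eventually.of_forall fun z => ?_)
      rw [Real.norm_eq_abs]
      exact abs_mul_le_half _ _
    · refine Integrable.mono' ((hφsq.add hu0ddsq).const_mul (1/2))
        ((hφc.mul hu0ddc).aestronglyMeasurable) (Eventually.of_forall fun z => ?_)
      rw [Real.norm_eq_abs]
      exact abs_mul_le_half _ _
  have hW0 : W 0 = 0 := by
    have he : W = fun _ => W 0 := funext hWconst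
    rw [he] at hWint
    rcases integrable_const_iff.1 hWint with h | h
    · exact h
    · exfalso
      rw [isFiniteMeasure_iff, Real.volume_univ] at h
      exact (lt_irrefl _ h).elim
  have hWzero : ∀ z, W z = 0 := fun z => (hWconst z).trans hW0
  refine ⟨φ 0 / deriv u₀ 0, fun z => ?_⟩
  have hq : ∀ z, HasDerivAt (fun z => φ z / deriv u₀ z) 0 z := by
    intro z
    have h := (hφd z).hasDerivAt.div (hu0dd z).hasDerivAt (hmono z).ne'
    refine h.congr_deriv (Eq.symm ?_)
    have hwz := hWzero z
    rw [hW] at hwz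
    simp only at hwz
    rw [eq_comm, div_eq_zero_iff]
    left
    linarith
  have hqconst : ∀ w, φ w / deriv u₀ w = φ 0 / deriv u₀ 0 := fun w =>
    is_const_of_deriv_eq_zero (fun x => (hq x).differentiableAt)
      (fun x => (hq x).deriv) w 0
  have := hqconst z
  rw [div_eq_iff (hmono z).ne'] at this
  exact this

end core4

/-- `u₀' ∈ H²(ℝ)`, `L⁰ u₀' = 0`, and `0` is a simple eigenvalue of `L⁰`:
every `φ ∈ H²(ℝ)` with `φ'' + f'(u₀) φ = 0` is a scalar multiple of `u₀'`. -/
theorem stmt_6 (f u₀ : ℝ → ℝ) (hf : NonlinH1 f) (hu₀ : IsHeteroclinic f u₀)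
    (hmono : ∀ z : ℝ, 0 < deriv u₀ z) :
    MemH2R (deriv u₀) ∧
    (∀ z : ℝ, deriv (deriv (deriv u₀)) z + deriv f (u₀ z) * deriv u₀ z = 0) ∧
    ∀ φ : ℝ → ℝ, MemH2R φ → (∀ z : ℝ, deriv (deriv φ) z + deriv f (u₀ z) * φ z = 0) →
      ∃ c : ℝ, ∀ z : ℝ, φ z = c * deriv u₀ z := by
  refine ⟨memH2 hf hu₀ hmono, fun z => ?_, fun φ hφ hode => simple_ev hf hu₀ hmono φ hφ hode⟩
  have h := (u0ddd_eq hf hu₀ z).deriv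
  rw [h]
  ring
end

section
/- Let ε ≥ 0, b ∈ ℝ, and let u ∈ C²(ℝ) with u - u₀ ∈ H²(ℝ) satisfy u'' - ε·Δu + f(u) = -b·u₀' on ℝ. Then b·∫_ℝ u₀'(z)·u'(z) dz = 0; i.e., multiplying the equation by u' and integrating over ℝ annihilates the left-hand side (using ∫ u'u'' dz = 0, ∫ f(u)u' dz = F(1) - F(0) = 0, and ∫ (Δu)·u' dz = 0). -/
open MeasureTheory Filter Real
open Set
open scoped ENNReal NNReal

set_option maxHeartbeats 1000000

lemma limZero_atTop {g : ℝ → ℝ} (hg : Integrable g) (h0 : ∀ x, 0 ≤ g x)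
    {L : ℝ} (hL : Tendsto g atTop (nhds L)) : L = 0 := by
  by_contra hne
  have hLpos : 0 < L := lt_of_le_of_ne (ge_of_tendsto hL (Eventually.of_forall h0)) (Ne.symm hne)
  obtain ⟨A, hA⟩ := (hL.eventually (eventually_ge_nhds (by linarith : L / 2 < L))).exists_forall_of_atTop
  have hfin : ∫⁻ x in Ioi A, ‖g x‖₊ ∂volume < ⊤ := by
    have := hg.integrableOn (s := Ioi A)
    exact this.2
  have hbig : (⊤ : ℝ≥0∞) ≤ ∫⁻ x in Ioi A, ‖g x‖₊ ∂volume := by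
    have h1 : ∫⁻ x in Ioi A, ENNReal.ofReal (L / 2) ∂volume ≤ ∫⁻ x in Ioi A, ‖g x‖₊ ∂volume := by
      refine setLIntegral_mono' measurableSet_Ioi (fun x hx => ?_)
      rw [← enorm_eq_nnnorm, ← ofReal_norm]
      exact ENNReal.ofReal_le_ofReal (by
        rw [Real.norm_eq_abs, abs_of_nonneg (h0 x)]; exact hA x (le_of_lt hx))
    calc (⊤ : ℝ≥0∞) = ENNReal.ofReal (L / 2) * volume (Ioi A) := by
          rw [Real.volume_Ioi, ENNReal.mul_top]
          simp [ENNReal.ofReal_eq_zero, not_le, hLpos, (by linarith : (0:ℝ) < L/2)]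
      _ = ∫⁻ x in Ioi A, ENNReal.ofReal (L / 2) ∂volume := by
          rw [setLIntegral_const]
      _ ≤ _ := h1
  exact absurd (lt_of_le_of_lt hbig hfin) (lt_irrefl _)

lemma limZero_atBot {g : ℝ → ℝ} (hg : Integrable g) (h0 : ∀ x, 0 ≤ g x)
    {L : ℝ} (hL : Tendsto g atBot (nhds L)) : L = 0 := by
  by_contra hne
  have hLpos : 0 < L := lt_of_le_of_ne (ge_of_tendsto hL (Eventually.of_forall h0)) (Ne.symm hne)
  obtain ⟨A, hA⟩ := (hL.eventually (eventually_ge_nhds (by linarith : L / 2 < L))).exists_forall_of_atBot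
  have hfin : ∫⁻ x in Iio A, ‖g x‖₊ ∂volume < ⊤ := (hg.integrableOn (s := Iio A)).2
  have hbig : (⊤ : ℝ≥0∞) ≤ ∫⁻ x in Iio A, ‖g x‖₊ ∂volume := by
    have h1 : ∫⁻ x in Iio A, ENNReal.ofReal (L / 2) ∂volume ≤ ∫⁻ x in Iio A, ‖g x‖₊ ∂volume := by
      refine setLIntegral_mono' measurableSet_Iio (fun x hx => ?_)
      rw [← enorm_eq_nnnorm, ← ofReal_norm]
      exact ENNReal.ofReal_le_ofReal (by
        rw [Real.norm_eq_abs, abs_of_nonneg (h0 x)]; exact hA x (le_of_lt hx))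
    calc (⊤ : ℝ≥0∞) = ENNReal.ofReal (L / 2) * volume (Iio A) := by
          rw [Real.volume_Iio, ENNReal.mul_top]
          simp [ENNReal.ofReal_eq_zero, not_le, (by linarith : (0:ℝ) < L/2)]
      _ = ∫⁻ x in Iio A, ENNReal.ofReal (L / 2) ∂volume := by rw [setLIntegral_const]
      _ ≤ _ := h1
  exact absurd (lt_of_le_of_lt hbig hfin) (lt_irrefl _)

lemma tendsto_zero_of_sq {g : ℝ → ℝ} {l : Filter ℝ}
    (h : Tendsto (fun x => g x ^ 2) l (nhds 0)) : Tendsto g l (nhds 0) := by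
  have habs : Tendsto (fun x => |g x|) l (nhds 0) := by
    have : Tendsto (fun x => Real.sqrt (g x ^ 2)) l (nhds 0) := by
      have := (Real.continuous_sqrt.tendsto 0).comp h
      simpa [Function.comp_def] using this
    simpa [Real.sqrt_sq_eq_abs] using this
  exact squeeze_zero_norm (fun x => le_of_eq (Real.norm_eq_abs _)) habs

lemma of_contDiff_two {φ : ℝ → ℝ} (h : ContDiff ℝ 2 φ) :
    Differentiable ℝ φ ∧ Differentiable ℝ (deriv φ) ∧ Continuous (deriv (deriv φ)) := by
  have h2 : ContDiff ℝ ((1 : WithTop ℕ∞) + 1) φ := by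
    convert h using 2; norm_num
  rw [contDiff_succ_iff_deriv] at h2
  obtain ⟨hdiff, -, h1⟩ := h2
  rw [contDiff_one_iff_deriv] at h1
  exact ⟨hdiff, h1.1, h1.2⟩

lemma h1_tendsto_zero {φ : ℝ → ℝ} (hφ : Differentiable ℝ φ)
    (h1 : MemLp φ 2 (volume : Measure ℝ)) (h2 : MemLp (deriv φ) 2 (volume : Measure ℝ)) :
    Tendsto φ atTop (nhds 0) ∧ Tendsto φ atBot (nhds 0) := by
  set g : ℝ → ℝ := fun x => φ x ^ 2 with hg_def
  have hgint : Integrable g := h1.integrable_sq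
  set g' : ℝ → ℝ := fun x => 2 * (φ x * deriv φ x) with hg'_def
  have hg'int : Integrable g' := by
    have hmul : Integrable (fun x => φ x * deriv φ x) := by
      refine Integrable.mono' (g := fun x => φ x ^ 2 + deriv φ x ^ 2)
        (h1.integrable_sq.add h2.integrable_sq) (h1.aestronglyMeasurable.mul h2.aestronglyMeasurable)
        (Eventually.of_forall fun x => ?_)
      rw [Real.norm_eq_abs, abs_mul]
      have h1 := sq_nonneg (|φ x| - |deriv φ x|)
      have h2 := sq_abs (φ x)
      have h3 := sq_abs (deriv φ x)
      nlinarith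
    simpa [hg'_def] using hmul.const_mul 2
  have hgderiv : ∀ x, HasDerivAt g (g' x) x := by
    intro x
    have := ((hφ x).hasDerivAt.mul (hφ x).hasDerivAt)
    have h' : HasDerivAt (fun y => φ y * φ y) (deriv φ x * φ x + φ x * deriv φ x) x := this
    have : HasDerivAt g (deriv φ x * φ x + φ x * deriv φ x) x := by
      convert h' using 2 with y
      · simp [hg_def, sq]
    convert this using 1
    simp [hg'_def]; ring
  have hftc : ∀ x : ℝ, g x = g 0 + ∫ t in (0:ℝ)..x, g' t := by
    intro x
    have := intervalIntegral.integral_eq_sub_of_hasDerivAt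
      (f := g) (f' := g') (a := 0) (b := x) (fun t _ => hgderiv t)
      (hg'int.intervalIntegrable (a := 0) (b := x))
    linarith [this]
  constructor
  · have hlim : Tendsto (fun x => ∫ t in (0:ℝ)..x, g' t) atTop
        (nhds (∫ t in Ioi (0:ℝ), g' t)) :=
      intervalIntegral_tendsto_integral_Ioi 0 hg'int.integrableOn tendsto_id
    have hgt : Tendsto g atTop (nhds (g 0 + ∫ t in Ioi (0:ℝ), g' t)) := by
      have := (tendsto_const_nhds (x := g 0) (f := atTop)).add hlim
      exact Tendsto.congr (fun x => (hftc x).symm) this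
    have hz := limZero_atTop hgint (fun x => sq_nonneg _) hgt
    exact tendsto_zero_of_sq (by rwa [hz] at hgt)
  · have hlim : Tendsto (fun x => ∫ t in x..(0:ℝ), g' t) atBot
        (nhds (∫ t in Iic (0:ℝ), g' t)) :=
      intervalIntegral_tendsto_integral_Iic 0 hg'int.integrableOn tendsto_id
    have hftc' : ∀ x : ℝ, g x = g 0 - ∫ t in x..(0:ℝ), g' t := by
      intro x
      rw [intervalIntegral.integral_symm]
      have := hftc x; linarith
    have hgt : Tendsto g atBot (nhds (g 0 - ∫ t in Iic (0:ℝ), g' t)) := by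
      have := (tendsto_const_nhds (x := g 0) (f := atBot)).sub hlim
      exact Tendsto.congr (fun x => (hftc' x).symm) this
    have hz := limZero_atBot hgint (fun x => sq_nonneg _) hgt
    exact tendsto_zero_of_sq (by rwa [hz] at hgt)

lemma bounded_of_tendsto {φ : ℝ → ℝ} (hc : Continuous φ) {p q : ℝ}
    (hb : Tendsto φ atBot (nhds p)) (ht : Tendsto φ atTop (nhds q)) :
    ∃ M : ℝ, 0 < M ∧ ∀ x, |φ x| ≤ M := by
  have htt : Tendsto (fun x => |φ x|) atTop (nhds |q|) := ht.abs
  have hbb : Tendsto (fun x => |φ x|) atBot (nhds |p|) := hb.abs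
  obtain ⟨B, hB⟩ := (htt.eventually (eventually_le_nhds (lt_add_one |q|))).exists_forall_of_atTop
  obtain ⟨A, hA⟩ := (hbb.eventually (eventually_le_nhds (lt_add_one |p|))).exists_forall_of_atBot
  obtain ⟨C, hC⟩ := (isCompact_Icc (a := A) (b := B)).exists_bound_of_continuousOn hc.continuousOn
  refine ⟨max C (max (|p| + 1) (|q| + 1)) + 1, by positivity, fun x => ?_⟩
  rcases le_total x A with hxA | hAx
  · have := hA x hxA
    have h2 : |p| + 1 ≤ max C (max (|p| + 1) (|q| + 1)) := le_max_of_le_right (le_max_left _ _)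
    linarith
  rcases le_total B x with hBx | hxB
  · have := hB x hBx
    have h2 : |q| + 1 ≤ max C (max (|p| + 1) (|q| + 1)) := le_max_of_le_right (le_max_right _ _)
    linarith
  · have := hC x ⟨hAx, hxB⟩
    rw [Real.norm_eq_abs] at this
    have h2 : C ≤ max C (max (|p| + 1) (|q| + 1)) := le_max_left _ _
    linarith

lemma tail_tendsto_atTop {v w : ℝ → ℝ} (hv : Continuous v) (hw : Continuous w)
    (hv0 : Tendsto v atTop (nhds 0)) {M : ℝ} (hM : 0 < M) (hwb : ∀ z, |w z| ≤ M) (k : ℝ) :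
    Tendsto (fun R : ℝ => ∫ z in R..(R + k), w z * v z) atTop (nhds 0) := by
  rw [NormedAddCommGroup.tendsto_nhds_zero]
  intro ε hε
  set δ : ℝ := ε / (2 * M * (|k| + 1)) with hδ
  have hδpos : 0 < δ := by positivity
  have habs : Tendsto (fun x => |v x|) atTop (nhds 0) := by simpa using hv0.abs
  obtain ⟨S, hS⟩ := (habs.eventually (eventually_le_nhds (a := (0:ℝ)) (b := δ) hδpos)).exists_forall_of_atTop
  filter_upwards [eventually_ge_atTop (S + |k|)] with R hR
  have hbound : ∀ x ∈ Set.uIoc R (R + k), ‖w x * v x‖ ≤ M * δ := by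
    intro x hx
    have hx1 : min R (R + k) < x := hx.1
    have hxS : S ≤ x := by
      have : R - |k| ≤ min R (R + k) := by
        rcases le_total 0 k with h | h
        · rw [min_eq_left (by linarith)]; have := abs_nonneg k; linarith
        · rw [min_eq_right (by linarith)]; rw [abs_of_nonpos h]; linarith
      linarith
    have : |v x| ≤ δ := hS x hxS
    rw [Real.norm_eq_abs, abs_mul]
    exact mul_le_mul (hwb x) this (abs_nonneg _) (le_of_lt hM)
  have := intervalIntegral.norm_integral_le_of_norm_le_const hbound
  have hlen : |R + k - R| = |k| := by ring_nf
  rw [hlen] at this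
  calc ‖∫ z in R..(R + k), w z * v z‖ ≤ M * δ * |k| := this
    _ < ε := by
        rw [hδ]
        rw [show M * (ε / (2 * M * (|k| + 1))) * |k| = ε * ((M * |k|) / (2 * M * (|k| + 1))) by ring]
        have hlt : (M * |k|) / (2 * M * (|k| + 1)) < 1 := by
          rw [div_lt_one (by positivity)]
          nlinarith [abs_nonneg k]
        nlinarith

lemma tail_tendsto_atBot {v w : ℝ → ℝ} (hv0 : Tendsto v atBot (nhds 0))
    {M : ℝ} (hM : 0 < M) (hwb : ∀ z, |w z| ≤ M) (k : ℝ) :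
    Tendsto (fun R : ℝ => ∫ z in R..(R + k), w z * v z) atBot (nhds 0) := by
  rw [NormedAddCommGroup.tendsto_nhds_zero]
  intro ε hε
  set δ : ℝ := ε / (2 * M * (|k| + 1)) with hδ
  have hδpos : 0 < δ := by positivity
  have habs : Tendsto (fun x => |v x|) atBot (nhds 0) := by simpa using hv0.abs
  obtain ⟨S, hS⟩ := (habs.eventually
    (eventually_le_nhds (a := (0:ℝ)) (b := δ) hδpos)).exists_forall_of_atBot
  filter_upwards [eventually_le_atBot (S - |k|)] with R hR
  have hbound : ∀ x ∈ Set.uIoc R (R + k), ‖w x * v x‖ ≤ M * δ := by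
    intro x hx
    have hx2 : x ≤ max R (R + k) := hx.2
    have hxS : x ≤ S := by
      have : max R (R + k) ≤ R + |k| := by
        rcases le_total 0 k with h | h
        · rw [max_eq_right (by linarith)]; rw [abs_of_nonneg h]
        · rw [max_eq_left (by linarith)]; have := abs_nonneg k; linarith
      linarith
    have : |v x| ≤ δ := hS x hxS
    rw [Real.norm_eq_abs, abs_mul]
    exact mul_le_mul (hwb x) this (abs_nonneg _) (le_of_lt hM)
  have h1 := intervalIntegral.norm_integral_le_of_norm_le_const hbound
  have hlen : |R + k - R| = |k| := by ring_nf
  rw [hlen] at h1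
  calc ‖∫ z in R..(R + k), w z * v z‖ ≤ M * δ * |k| := h1
    _ < ε := by
        rw [hδ]
        rw [show M * (ε / (2 * M * (|k| + 1))) * |k| = ε * ((M * |k|) / (2 * M * (|k| + 1))) by ring]
        have hlt : (M * |k|) / (2 * M * (|k| + 1)) < 1 := by
          rw [div_lt_one (by positivity)]
          nlinarith [abs_nonneg k]
        nlinarith

lemma het_deriv_tendsto {f u₀ : ℝ → ℝ} (hfc : Continuous f)
    (hfi : (∫ s in (0:ℝ)..1, f s) = 0)
    (hu2 : ContDiff ℝ 2 u₀) (hode : ∀ z, deriv (deriv u₀) z + f (u₀ z) = 0)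
    (hbot : Tendsto u₀ atBot (nhds 0)) (htop : Tendsto u₀ atTop (nhds 1)) :
    Tendsto (deriv u₀) atTop (nhds 0) ∧ Tendsto (deriv u₀) atBot (nhds 0) := by
  obtain ⟨hd, hd', _⟩ := of_contDiff_two hu2
  set F : ℝ → ℝ := fun y => ∫ s in (0:ℝ)..y, f s with hF_def
  have hF : ∀ y, HasDerivAt F (f y) y := fun y => (hfc.integral_hasStrictDerivAt 0 y).hasDerivAt
  have hFc : Continuous F := (Differentiable.continuous (fun y => (hF y).differentiableAt))
  set E : ℝ → ℝ := fun z => deriv u₀ z ^ 2 / 2 + F (u₀ z) with hE_def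
  have hE : ∀ z, HasDerivAt E 0 z := by
    intro z
    have h1 : HasDerivAt (deriv u₀) (deriv (deriv u₀) z) z := (hd' z).hasDerivAt
    have h2 : HasDerivAt (fun w => deriv u₀ w ^ 2 / 2)
        (deriv u₀ z * deriv (deriv u₀) z) z := by
      have h := (h1.mul h1).div_const 2
      have heq : ∀ w, deriv u₀ w * deriv u₀ w / 2 = deriv u₀ w ^ 2 / 2 := fun w => by ring
      rw [show (deriv (deriv u₀) z * deriv u₀ z + deriv u₀ z * deriv (deriv u₀) z) / 2
          = deriv u₀ z * deriv (deriv u₀) z by ring] at h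
      exact HasDerivAt.congr_of_eventuallyEq h (Eventually.of_forall fun w => (heq w).symm)
    have h3 : HasDerivAt (fun w => F (u₀ w)) (f (u₀ z) * deriv u₀ z) z :=
      (hF (u₀ z)).comp z (hd z).hasDerivAt
    have h4 := h2.add h3
    have hz : deriv (deriv u₀) z = -f (u₀ z) := by linarith [hode z]
    rw [show deriv u₀ z * deriv (deriv u₀) z + f (u₀ z) * deriv u₀ z = 0 by
      rw [hz]; ring] at h4
    exact h4
  have hconst : ∀ z, E z = E 0 := fun z =>
    is_const_of_deriv_eq_zero (fun x => (hE x).differentiableAt) (fun x => (hE x).deriv) z 0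
  have hsq : ∀ z, deriv u₀ z ^ 2 = 2 * (E 0 - F (u₀ z)) := by
    intro z
    have h : deriv u₀ z ^ 2 / 2 + F (u₀ z) = E 0 := hconst z
    linear_combination 2 * h
  have hF0 : F 0 = 0 := intervalIntegral.integral_same
  have hF1 : F 1 = 0 := hfi
  have htopsq : Tendsto (fun z => deriv u₀ z ^ 2) atTop (nhds (2 * E 0)) := by
    have h1 : Tendsto (fun z => 2 * (E 0 - F (u₀ z))) atTop (nhds (2 * (E 0 - F 1))) :=
      (tendsto_const_nhds.sub ((hFc.tendsto 1).comp htop)).const_mul 2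
    rw [hF1, sub_zero] at h1
    exact Tendsto.congr (fun z => (hsq z).symm) h1
  have hbotsq : Tendsto (fun z => deriv u₀ z ^ 2) atBot (nhds (2 * E 0)) := by
    have h1 : Tendsto (fun z => 2 * (E 0 - F (u₀ z))) atBot (nhds (2 * (E 0 - F 0))) :=
      (tendsto_const_nhds.sub ((hFc.tendsto 0).comp hbot)).const_mul 2
    rw [hF0, sub_zero] at h1
    exact Tendsto.congr (fun z => (hsq z).symm) h1
  have hc0 : E 0 = 0 := by
    have hge : 0 ≤ 2 * E 0 :=
      ge_of_tendsto htopsq (Eventually.of_forall fun z => sq_nonneg _)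
    rcases eq_or_lt_of_le hge with h | hpos
    · linarith
    · exfalso
      have hE0 : 0 < E 0 := by linarith
      obtain ⟨A, hA⟩ := (htopsq.eventually
        (eventually_ge_nhds (show E 0 < 2 * E 0 by linarith))).exists_forall_of_atTop
      set s : ℝ := Real.sqrt (E 0) with hs_def
      have hspos : 0 < s := Real.sqrt_pos.mpr hE0
      have habs : ∀ z, A ≤ z → s ≤ |deriv u₀ z| := by
        intro z hz
        have h1 : E 0 ≤ deriv u₀ z ^ 2 := hA z hz
        have := Real.sqrt_le_sqrt h1
        rwa [Real.sqrt_sq_eq_abs] at this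
      have hne : ∀ z, A ≤ z → deriv u₀ z ≠ 0 := by
        intro z hz h0
        have := habs z hz
        rw [h0, abs_zero] at this
        linarith
      have hcont' : Continuous (deriv u₀) := hd'.continuous
      have hcase : s ≤ deriv u₀ A ∨ deriv u₀ A ≤ -s := by
        rcases le_total 0 (deriv u₀ A) with h | h
        · left; have := habs A le_rfl; rwa [abs_of_nonneg h] at this
        · right; have := habs A le_rfl; rw [abs_of_nonpos h] at this; linarith
      -- constant sign lemma
      have hdichot : ∀ z, A ≤ z → s ≤ deriv u₀ z ∨ deriv u₀ z ≤ -s := by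
        intro z hz
        rcases le_total 0 (deriv u₀ z) with h | h
        · left; have := habs z hz; rwa [abs_of_nonneg h] at this
        · right; have := habs z hz; rw [abs_of_nonpos h] at this; linarith
      have hivt : ∀ z₁ z₂, A ≤ z₁ → z₁ ≤ z₂ → s ≤ deriv u₀ z₁ → s ≤ deriv u₀ z₂ := by
        intro z₁ z₂ hz₁ hle hpos₁
        rcases hdichot z₂ (le_trans hz₁ hle) with h | h
        · exact h
        · exfalso
          have h0mem : (0:ℝ) ∈ Icc (deriv u₀ z₂) (deriv u₀ z₁) :=
            ⟨by linarith, by linarith⟩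
          obtain ⟨x, hx, hx0⟩ := intermediate_value_Icc' hle hcont'.continuousOn h0mem
          exact hne x (le_trans hz₁ hx.1) hx0
      have hivt' : ∀ z₁ z₂, A ≤ z₁ → z₁ ≤ z₂ → deriv u₀ z₁ ≤ -s → deriv u₀ z₂ ≤ -s := by
        intro z₁ z₂ hz₁ hle hneg₁
        rcases hdichot z₂ (le_trans hz₁ hle) with h | h
        · exfalso
          have h0mem : (0:ℝ) ∈ Icc (deriv u₀ z₁) (deriv u₀ z₂) :=
            ⟨by linarith, by linarith⟩
          obtain ⟨x, hx, hx0⟩ := intermediate_value_Icc hle hcont'.continuousOn h0mem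
          exact hne x (le_trans hz₁ hx.1) hx0
        · exact h
      -- growth estimate
      have hgrow : ∀ (σ : ℝ), (∀ z, A ≤ z → σ ≤ deriv u₀ z) →
          ∀ z, A ≤ z → u₀ A + σ * (z - A) ≤ u₀ z := by
        intro σ hσ z hz
        set ψ : ℝ → ℝ := fun x => u₀ x - σ * x with hψ_def
        have hψd : ∀ x, HasDerivAt ψ (deriv u₀ x - σ) x := by
          intro x
          exact (hd x).hasDerivAt.sub ((hasDerivAt_id x).const_mul σ |>.congr_deriv (by ring))
        have hmono : MonotoneOn ψ (Ici A) := by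
          apply monotoneOn_of_deriv_nonneg (convex_Ici A)
            (Continuous.continuousOn (by
              exact (hd.continuous.sub (continuous_const.mul continuous_id))))
            (fun x hx => (hψd x).differentiableAt.differentiableWithinAt)
          intro x hx
          rw [(hψd x).deriv]
          have : A ≤ x := le_of_lt (by simpa [interior_Ici] using hx)
          linarith [hσ x this]
        have := hmono (self_mem_Ici) (mem_Ici.mpr hz) hz
        simp only [hψ_def] at this
        nlinarith
      rcases hcase with hposA | hnegA
      · have hall : ∀ z, A ≤ z → s ≤ deriv u₀ z := fun z hz => hivt A z le_rfl hz hposA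
        have hub := hgrow s hall
        have htt : Tendsto u₀ atTop atTop := by
          apply tendsto_atTop_mono' atTop
            (eventually_atTop.mpr ⟨A, fun z hz => hub z hz⟩)
          have : Tendsto (fun z : ℝ => u₀ A + s * (z - A)) atTop atTop := by
            apply tendsto_atTop_add_const_left
            apply Tendsto.const_mul_atTop hspos
            exact tendsto_atTop_add_const_right _ _ tendsto_id
          exact this
        exact not_tendsto_atTop_of_tendsto_nhds htop htt
      · have hall : ∀ z, A ≤ z → deriv u₀ z ≤ -s := fun z hz => hivt' A z le_rfl hz hnegA
        have hub : ∀ z, A ≤ z → u₀ z ≤ u₀ A - s * (z - A) := by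
          intro z hz
          -- apply hgrow to -u₀? simpler: redo with ψ monotone decreasing
          have hψd : ∀ x, HasDerivAt (fun x => -u₀ x) (-deriv u₀ x) x :=
            fun x => (hd x).hasDerivAt.neg
          have h2 : ∀ x, A ≤ x → s ≤ -deriv u₀ x := fun x hx => by linarith [hall x hx]
          -- mimic hgrow for -u₀
          set ψ : ℝ → ℝ := fun x => -u₀ x - s * x with hψ_def
          have hψd' : ∀ x, HasDerivAt ψ (-deriv u₀ x - s) x := by
            intro x
            exact (hψd x).sub ((hasDerivAt_id x).const_mul s |>.congr_deriv (by ring))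
          have hmono : MonotoneOn ψ (Ici A) := by
            apply monotoneOn_of_deriv_nonneg (convex_Ici A)
              (Continuous.continuousOn (by
                exact ((hd.continuous.neg).sub (continuous_const.mul continuous_id))))
              (fun x hx => (hψd' x).differentiableAt.differentiableWithinAt)
            intro x hx
            rw [(hψd' x).deriv]
            have : A ≤ x := le_of_lt (by simpa [interior_Ici] using hx)
            linarith [h2 x this]
          have := hmono (self_mem_Ici) (mem_Ici.mpr hz) hz
          simp only [hψ_def] at this
          nlinarith
        have htt : Tendsto u₀ atTop atBot := by
          apply tendsto_atBot_mono' atTop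
            (eventually_atTop.mpr ⟨A, fun z hz => hub z hz⟩)
          have h1 : Tendsto (fun z : ℝ => (-s) * (z - A)) atTop atBot :=
            Tendsto.const_mul_atTop_of_neg (by linarith)
              (tendsto_atTop_add_const_right _ _ tendsto_id)
          have h2 : Tendsto (fun z : ℝ => u₀ A + (-s) * (z - A)) atTop atBot :=
            tendsto_atBot_add_const_left _ _ h1
          exact Tendsto.congr (fun z => by ring) h2
        exact not_tendsto_atBot_of_tendsto_nhds htop htt
  constructor
  · rw [hc0, mul_zero] at htopsq
    exact tendsto_zero_of_sq htopsq
  · rw [hc0, mul_zero] at hbotsq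
    exact tendsto_zero_of_sq hbotsq

lemma delta_term_tendsto {a : ℤ → ℝ} {u : ℝ → ℝ} {M M' : ℝ} (ha1 : Summable (fun k : ℤ => |a k|))
    (ha0 : (∑' k : ℤ, a k) = 0) (hsym : ∀ k : ℤ, a k = a (-k))
    (ha2 : Summable (fun k : ℤ => |a k| * (k : ℝ) ^ 2))
    (hud : Differentiable ℝ u) (hu'c : Continuous (deriv u))
    (hM : 0 < M) (hM' : 0 < M') (hub : ∀ z, |u z| ≤ M) (hub' : ∀ z, |deriv u z| ≤ M')
    (hutop : Tendsto u atTop (nhds 1)) (hubot : Tendsto u atBot (nhds 0))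
    (h'top : Tendsto (deriv u) atTop (nhds 0)) (h'bot : Tendsto (deriv u) atBot (nhds 0)) :
    Tendsto (fun R : ℝ => ∫ z in (-R)..R, deltaOp a u z * deriv u z) atTop (nhds 0) := by
  have huc : Continuous u := hud.continuous
  -- the localized integrals
  set J : ℤ → ℝ → ℝ := fun k R => ∫ z in (-R)..R, u (z - (k : ℝ)) * deriv u z with hJ_def
  have hgc : ∀ k : ℤ, Continuous (fun z : ℝ => u (z - (k : ℝ)) * deriv u z) := by
    intro k
    exact (huc.comp (continuous_id.sub continuous_const)).mul hu'c
  have hJb : ∀ (k : ℤ) (R : ℝ), |J k R| ≤ M * M' * |2 * R| := by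
    intro k R
    have hb : ∀ x ∈ Set.uIoc (-R) R, ‖u (x - (k:ℝ)) * deriv u x‖ ≤ M * M' := by
      intro x _
      rw [Real.norm_eq_abs, abs_mul]
      exact mul_le_mul (hub _) (hub' _) (abs_nonneg _) (le_of_lt hM)
    have := intervalIntegral.norm_integral_le_of_norm_le_const hb
    calc |J k R| ≤ M * M' * |R - -R| := this
      _ = M * M' * |2 * R| := by ring_nf
  -- step 1 : rewrite the integral as a sum for R ≥ 0
  have hswap : ∀ R : ℝ, 0 ≤ R →
      ∫ z in (-R)..R, deltaOp a u z * deriv u z = ∑' k : ℤ, a k * J k R := by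
    intro R hR
    have hle : -R ≤ R := by linarith
    rw [intervalIntegral.integral_of_le hle]
    have hptwise : ∀ z : ℝ, deltaOp a u z * deriv u z
        = ∑' k : ℤ, a k * u (z - (k : ℝ)) * deriv u z := by
      intro z
      rw [deltaOp, ← tsum_mul_right]
    rw [integral_congr_ae (Eventually.of_forall (fun z => hptwise z))]
    have hfin : ∑' (k : ℤ), (∫⁻ z in Ioc (-R) R, ‖a k * u (z - (k:ℝ)) * deriv u z‖₊ ∂volume) ≠ ⊤ := by
      have hbd : ∀ (k : ℤ), (∫⁻ z in Ioc (-R) R, ‖a k * u (z - (k:ℝ)) * deriv u z‖₊ ∂volume)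
          ≤ ENNReal.ofReal (|a k| * (M * M')) * ENNReal.ofReal (2 * R) := by
        intro k
        have h1 : ∀ z, (‖a k * u (z - (k:ℝ)) * deriv u z‖₊ : ℝ≥0∞)
            ≤ ENNReal.ofReal (|a k| * (M * M')) := by
          intro z
          rw [← enorm_eq_nnnorm, ← ofReal_norm]
          apply ENNReal.ofReal_le_ofReal
          rw [Real.norm_eq_abs, abs_mul, abs_mul]
          have h2 : |u (z - (k:ℝ))| * |deriv u z| ≤ M * M' :=
            mul_le_mul (hub _) (hub' _) (abs_nonneg _) (le_of_lt hM)
          calc |a k| * |u (z - (k:ℝ))| * |deriv u z| = |a k| * (|u (z - (k:ℝ))| * |deriv u z|) := by ring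
            _ ≤ |a k| * (M * M') := by
                exact mul_le_mul_of_nonneg_left h2 (abs_nonneg _)
        calc (∫⁻ z in Ioc (-R) R, ‖a k * u (z - (k:ℝ)) * deriv u z‖₊ ∂volume)
            ≤ ∫⁻ _ in Ioc (-R) R, ENNReal.ofReal (|a k| * (M * M')) ∂volume :=
              lintegral_mono (fun z => h1 z)
          _ = ENNReal.ofReal (|a k| * (M * M')) * volume (Ioc (-R) R) := by
              rw [setLIntegral_const]
          _ = ENNReal.ofReal (|a k| * (M * M')) * ENNReal.ofReal (2 * R) := by
              rw [Real.volume_Ioc]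
              congr 1
              congr 1
              ring
      apply ne_top_of_le_ne_top _ (ENNReal.tsum_le_tsum hbd)
      rw [ENNReal.tsum_mul_right]
      apply ENNReal.mul_ne_top
      · rw [← ENNReal.ofReal_tsum_of_nonneg (fun k => by positivity)
          (ha1.mul_right (M * M'))]
        exact ENNReal.ofReal_ne_top
      · exact ENNReal.ofReal_ne_top
    have hmeas : ∀ k : ℤ, AEStronglyMeasurable (fun z : ℝ => a k * u (z - (k:ℝ)) * deriv u z)
        (volume.restrict (Ioc (-R) R)) := by
      intro k
      exact (((continuous_const.mul (huc.comp (continuous_id.sub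
        continuous_const))).mul hu'c).aestronglyMeasurable).restrict
    have hswapped := MeasureTheory.integral_tsum (μ := volume.restrict (Ioc (-R) R))
      (f := fun (k : ℤ) (z : ℝ) => a k * u (z - (k:ℝ)) * deriv u z) hmeas hfin
    rw [hswapped]
    apply tsum_congr
    intro k
    have h1 : (fun z : ℝ => a k * u (z - (k:ℝ)) * deriv u z)
        = (fun z : ℝ => a k * (u (z - (k:ℝ)) * deriv u z)) := by funext z; ring
    rw [h1, MeasureTheory.integral_const_mul]
    exact congrArg (fun t => a k * t) (intervalIntegral.integral_of_le hle).symm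
  -- step 2 : decomposition of J k R + J (-k) R
  have hJdecomp : ∀ (k : ℤ) (R : ℝ), J k R + J (-k) R
      = u (R + (k:ℝ)) * u R - u (-R + (k:ℝ)) * u (-R)
        + (∫ z in (-R)..(-R + (k:ℝ)), u (z - (k:ℝ)) * deriv u z)
        - ∫ z in R..(R + (k:ℝ)), u (z - (k:ℝ)) * deriv u z := by
    intro k R
    have hcast : ∀ z : ℝ, z - ((-k : ℤ) : ℝ) = z + (k:ℝ) := by intro z; push_cast; ring
    have hJneg : J (-k) R = ∫ z in (-R)..R, u (z + (k:ℝ)) * deriv u z := by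
      apply intervalIntegral.integral_congr
      intro z _
      show u (z - ((-k : ℤ) : ℝ)) * deriv u z = u (z + (k:ℝ)) * deriv u z
      rw [hcast z]
    have hU : ∀ x ∈ Set.uIcc (-R) R, HasDerivAt (fun x => u (x + (k:ℝ))) (deriv u (x + (k:ℝ))) x := by
      intro x _
      have h := ((hud (x + (k:ℝ))).hasDerivAt).comp x ((hasDerivAt_id x).add_const (k:ℝ))
      simpa [Function.comp_def] using h
    have hV : ∀ x ∈ Set.uIcc (-R) R, HasDerivAt u (deriv u x) x :=
      fun x _ => (hud x).hasDerivAt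
    have hibp := intervalIntegral.integral_mul_deriv_eq_deriv_mul hU hV
      ((hu'c.comp (continuous_id.add continuous_const)).intervalIntegrable _ _)
      (hu'c.intervalIntegrable _ _)
    rw [hibp] at hJneg
    -- change of variables in the remaining integral
    have hcv : (∫ x in (-R)..R, deriv u (x + (k:ℝ)) * u x)
        = ∫ x in (-R + (k:ℝ))..(R + (k:ℝ)), deriv u x * u (x - (k:ℝ)) := by
      have h := intervalIntegral.integral_comp_add_right (a := -R) (b := R)
        (fun x => deriv u x * u (x - (k:ℝ))) (k:ℝ)
      rw [← h]
      apply intervalIntegral.integral_congr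
      intro x _
      simp [add_sub_cancel_right]
    have hcomm : (∫ x in (-R + (k:ℝ))..(R + (k:ℝ)), deriv u x * u (x - (k:ℝ)))
        = ∫ x in (-R + (k:ℝ))..(R + (k:ℝ)), u (x - (k:ℝ)) * deriv u x := by
      apply intervalIntegral.integral_congr
      intro x _
      ring
    -- adjacent interval algebra
    have hint : ∀ p q : ℝ, IntervalIntegrable (fun z => u (z - (k:ℝ)) * deriv u z) volume p q :=
      fun p q => (hgc k).intervalIntegrable p q
    have h1 := intervalIntegral.integral_add_adjacent_intervals
      (a := -R) (b := -R + (k:ℝ)) (c := R + (k:ℝ)) (hint _ _) (hint _ _)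
    have h2 := intervalIntegral.integral_add_adjacent_intervals
      (a := -R) (b := R) (c := R + (k:ℝ)) (hint _ _) (hint _ _)
    have hJk : J k R = ∫ z in (-R)..R, u (z - (k:ℝ)) * deriv u z := rfl
    rw [hJneg, hcv, hcomm]
    rw [hJk]
    linarith [h1, h2]
  -- step 3 : limit of J k R + J (-k) R
  have hH : ∀ k : ℤ, Tendsto (fun R => J k R + J (-k) R) atTop (nhds 1) := by
    intro k
    have t1 : Tendsto (fun R : ℝ => u (R + (k:ℝ)) * u R) atTop (nhds (1 * 1)) :=
      (hutop.comp (tendsto_atTop_add_const_right atTop _ tendsto_id)).mul hutop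
    have t2 : Tendsto (fun R : ℝ => u (-R + (k:ℝ)) * u (-R)) atTop (nhds (0 * 0)) := by
      have hneg : Tendsto (fun R : ℝ => -R + (k:ℝ)) atTop atBot :=
        tendsto_atBot_add_const_right atTop _ tendsto_neg_atTop_atBot
      exact (hubot.comp hneg).mul (hubot.comp tendsto_neg_atTop_atBot)
    have t4 : Tendsto (fun R : ℝ => ∫ z in R..(R + (k:ℝ)), u (z - (k:ℝ)) * deriv u z)
        atTop (nhds 0) :=
      tail_tendsto_atTop hu'c (huc.comp (continuous_id.sub continuous_const)) h'top hM
        (fun z => hub _) (k:ℝ)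
    have t3 : Tendsto (fun R : ℝ => ∫ z in (-R)..(-R + (k:ℝ)), u (z - (k:ℝ)) * deriv u z)
        atTop (nhds 0) := by
      have := (tail_tendsto_atBot (v := deriv u) (w := fun z => u (z - (k:ℝ))) h'bot hM
        (fun z => hub _) (k:ℝ)).comp tendsto_neg_atTop_atBot
      exact this
    have hcomb := ((t1.sub t2).add t3).sub t4
    rw [show (1:ℝ) * 1 - 0 * 0 + 0 - 0 = 1 by ring] at hcomb
    exact Tendsto.congr (fun R => (hJdecomp k R).symm) hcomb
  -- step 4 : uniform bound on J k R + J (-k) R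
  have hHb : ∀ (k : ℤ) (R : ℝ), |J k R + J (-k) R| ≤ 2 * M ^ 2 + 2 * (M * M') * |(k:ℝ)| := by
    intro k R
    rw [hJdecomp k R]
    have hb1 : |u (R + (k:ℝ)) * u R| ≤ M ^ 2 := by
      rw [abs_mul, sq]
      exact mul_le_mul (hub _) (hub _) (abs_nonneg _) (le_of_lt hM)
    have hb2 : |u (-R + (k:ℝ)) * u (-R)| ≤ M ^ 2 := by
      rw [abs_mul, sq]
      exact mul_le_mul (hub _) (hub _) (abs_nonneg _) (le_of_lt hM)
    have hbc : ∀ p : ℝ, |∫ z in p..(p + (k:ℝ)), u (z - (k:ℝ)) * deriv u z| ≤ M * M' * |(k:ℝ)| := by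
      intro p
      have hb : ∀ x ∈ Set.uIoc p (p + (k:ℝ)), ‖u (x - (k:ℝ)) * deriv u x‖ ≤ M * M' := by
        intro x _
        rw [Real.norm_eq_abs, abs_mul]
        exact mul_le_mul (hub _) (hub' _) (abs_nonneg _) (le_of_lt hM)
      have := intervalIntegral.norm_integral_le_of_norm_le_const hb
      calc |∫ z in p..(p + (k:ℝ)), u (z - (k:ℝ)) * deriv u z| ≤ M * M' * |p + (k:ℝ) - p| := this
        _ = M * M' * |(k:ℝ)| := by ring_nf
    have h3 := hbc (-R)
    have h4 := hbc R
    calc |u (R + (k:ℝ)) * u R - u (-R + (k:ℝ)) * u (-R)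
          + (∫ z in (-R)..(-R + (k:ℝ)), u (z - (k:ℝ)) * deriv u z)
          - ∫ z in R..(R + (k:ℝ)), u (z - (k:ℝ)) * deriv u z|
        ≤ |u (R + (k:ℝ)) * u R| + |u (-R + (k:ℝ)) * u (-R)|
          + |∫ z in (-R)..(-R + (k:ℝ)), u (z - (k:ℝ)) * deriv u z|
          + |∫ z in R..(R + (k:ℝ)), u (z - (k:ℝ)) * deriv u z| := by
          exact (abs_sub _ _).trans (by
            have := abs_add_le (u (R + (k:ℝ)) * u R - u (-R + (k:ℝ)) * u (-R))
              (∫ z in (-R)..(-R + (k:ℝ)), u (z - (k:ℝ)) * deriv u z)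
            have h5 := abs_sub (u (R + (k:ℝ)) * u R) (u (-R + (k:ℝ)) * u (-R))
            linarith)
      _ ≤ 2 * M ^ 2 + 2 * (M * M') * |(k:ℝ)| := by linarith
  -- step 5 : summability and the symmetry identity
  have hsummJ : ∀ R : ℝ, Summable (fun k : ℤ => a k * J k R) := by
    intro R
    apply Summable.of_norm_bounded (g := fun k : ℤ => |a k| * (M * M' * |2 * R|))
      (ha1.mul_right _)
    intro k
    rw [Real.norm_eq_abs, abs_mul]
    exact mul_le_mul_of_nonneg_left (hJb k R) (abs_nonneg _)
  have hsummJneg : ∀ R : ℝ, Summable (fun k : ℤ => a k * J (-k) R) := by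
    intro R
    apply Summable.of_norm_bounded (g := fun k : ℤ => |a k| * (M * M' * |2 * R|))
      (ha1.mul_right _)
    intro k
    rw [Real.norm_eq_abs, abs_mul]
    exact mul_le_mul_of_nonneg_left (hJb (-k) R) (abs_nonneg _)
  have hnegsum : ∀ R : ℝ, (∑' k : ℤ, a k * J (-k) R) = ∑' k : ℤ, a k * J k R := by
    intro R
    have h1 := (Equiv.neg ℤ).tsum_eq (f := fun k : ℤ => a k * J (-k) R)
    simp only [Equiv.neg_apply, neg_neg] at h1
    rw [← h1]
    apply tsum_congr
    intro k
    rw [← hsym k]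
  have hhalf : ∀ R : ℝ, (∑' k : ℤ, a k * J k R)
      = (1/2) * ∑' k : ℤ, a k * (J k R + J (-k) R) := by
    intro R
    have hadd : (∑' k : ℤ, a k * (J k R + J (-k) R))
        = (∑' k : ℤ, a k * J k R) + ∑' k : ℤ, a k * J (-k) R := by
      rw [← Summable.tsum_add (hsummJ R) (hsummJneg R)]
      apply tsum_congr
      intro k
      ring
    rw [hadd, hnegsum R]
    ring
  -- step 6 : dominated convergence
  have hsummBound : Summable (fun k : ℤ => |a k| * (2 * M ^ 2 + 2 * (M * M') * |(k:ℝ)|)) := by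
    have hak : Summable (fun k : ℤ => |a k| * |(k:ℝ)|) := by
      apply Summable.of_nonneg_of_le (fun k => by positivity) _ (ha1.add ha2)
      intro k
      have h1 : |(k:ℝ)| ≤ 1 + (k:ℝ)^2 := by nlinarith [sq_abs ((k:ℝ)), sq_nonneg (|(k:ℝ)| - 1)]
      calc |a k| * |(k:ℝ)| ≤ |a k| * (1 + (k:ℝ)^2) :=
            mul_le_mul_of_nonneg_left h1 (abs_nonneg _)
        _ = |a k| + |a k| * (k:ℝ)^2 := by ring
    have h2 : (fun k : ℤ => |a k| * (2 * M ^ 2 + 2 * (M * M') * |(k:ℝ)|))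
        = fun k : ℤ => |a k| * (2 * M ^ 2) + (2 * (M * M')) * (|a k| * |(k:ℝ)|) := by
      funext k; ring
    rw [h2]
    exact (ha1.mul_right _).add (hak.mul_left _)
  have hdom : Tendsto (fun R : ℝ => ∑' k : ℤ, a k * (J k R + J (-k) R)) atTop
      (nhds (∑' k : ℤ, a k * 1)) := by
    apply tendsto_tsum_of_dominated_convergence hsummBound
    · intro k
      exact (hH k).const_mul (a k)
    · apply Eventually.of_forall
      intro R k
      rw [Real.norm_eq_abs, abs_mul]
      exact mul_le_mul_of_nonneg_left (hHb k R) (abs_nonneg _)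
  have hzero : (∑' k : ℤ, a k * 1) = 0 := by simpa using ha0
  rw [hzero] at hdom
  have hS : Tendsto (fun R : ℝ => ∑' k : ℤ, a k * J k R) atTop (nhds 0) := by
    have := hdom.const_mul (1/2 : ℝ)
    rw [mul_zero] at this
    exact Tendsto.congr (fun R => (hhalf R).symm) this
  apply Tendsto.congr' _ hS
  filter_upwards [eventually_ge_atTop (0:ℝ)] with R hR
  exact (hswap R hR).symm

/-- Multiplying the projected equation `u'' - ε Δu + f(u) = -b u₀'` by `u'` and
integrating over `ℝ` annihilates the left-hand side: `b ∫ u₀' u' = 0`. -/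
theorem stmt_12 (a : ℤ → ℝ) (f u₀ : ℝ → ℝ)
    (ha : CoeffH2 a) (hf : NonlinH1 f) (hu₀ : IsHeteroclinic f u₀)
    (ε b : ℝ) (hε : 0 ≤ ε) (u : ℝ → ℝ) (hu : ContDiff ℝ 2 u)
    (hdiff : MemH2R (fun z => u z - u₀ z))
    (heq : ∀ z : ℝ, deriv (deriv u) z - ε * deltaOp a u z + f (u z) = -b * deriv u₀ z) :
    b * ∫ z : ℝ, deriv u₀ z * deriv u z = 0 := by
  obtain ⟨ha1, ha0, -, hsym, ha2⟩ := ha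
  obtain ⟨hfC2, hf0, hf1, -, -, hfi, -⟩ := hf
  obtain ⟨hu₀2, hode, hu₀bot, hu₀top⟩ := hu₀
  obtain ⟨hwd, hwd', hw2, hw'2, hw''2⟩ := hdiff
  obtain ⟨hud, hud', hu''c⟩ := of_contDiff_two hu
  obtain ⟨hu₀d, hu₀d', hu₀''c⟩ := of_contDiff_two hu₀2
  have huc : Continuous u := hud.continuous
  have hu'c : Continuous (deriv u) := hud'.continuous
  have hu₀'c : Continuous (deriv u₀) := hu₀d'.continuous
  have hfc : Continuous f := hfC2.continuous
  -- derivative of the difference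
  have hderw : deriv (fun z => u z - u₀ z) = fun z => deriv u z - deriv u₀ z :=
    funext fun z => deriv_fun_sub (hud z) (hu₀d z)
  -- limits of w and w'
  have hw0 := h1_tendsto_zero hwd hw2 hw'2
  have hw'0 := h1_tendsto_zero hwd' hw'2 hw''2
  have hw'0' : Tendsto (fun z => deriv u z - deriv u₀ z) atTop (nhds 0) ∧
      Tendsto (fun z => deriv u z - deriv u₀ z) atBot (nhds 0) := by
    rw [← hderw]; exact hw'0
  -- limits of u₀'
  have hu₀' := het_deriv_tendsto hfc hfi hu₀2 hode hu₀bot hu₀top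
  -- limits of u
  have hutop : Tendsto u atTop (nhds 1) := by
    have := hu₀top.add hw0.1
    rw [add_zero] at this
    exact Tendsto.congr (fun z => by ring) this
  have hubot : Tendsto u atBot (nhds 0) := by
    have := hu₀bot.add hw0.2
    rw [add_zero] at this
    exact Tendsto.congr (fun z => by ring) this
  -- limits of u'
  have h'top : Tendsto (deriv u) atTop (nhds 0) := by
    have := hu₀'.1.add hw'0'.1
    rw [add_zero] at this
    exact Tendsto.congr (fun z => by ring) this
  have h'bot : Tendsto (deriv u) atBot (nhds 0) := by
    have := hu₀'.2.add hw'0'.2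
    rw [add_zero] at this
    exact Tendsto.congr (fun z => by ring) this
  -- bounds
  obtain ⟨M, hM, hub⟩ := bounded_of_tendsto huc hubot hutop
  obtain ⟨M', hM', hub'⟩ := bounded_of_tendsto hu'c h'bot h'top
  -- continuity of the nonlocal operator
  have hΔc : Continuous (deltaOp a u) := by
    apply continuous_tsum (u := fun k : ℤ => |a k| * M)
      (fun k => continuous_const.mul (huc.comp (continuous_id.sub continuous_const)))
      (ha1.mul_right M)
    intro k z
    rw [Real.norm_eq_abs, Pi.mul_apply, abs_mul]
    exact mul_le_mul_of_nonneg_left (hub _) (abs_nonneg _)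
  -- the three integral limits
  have hB : Tendsto (fun R : ℝ => ∫ z in (-R)..R, deltaOp a u z * deriv u z) atTop (nhds 0) :=
    delta_term_tendsto ha1 ha0 hsym ha2 hud hu'c hM hM' hub hub' hutop hubot h'top h'bot
  -- kinetic term
  have hGd : ∀ z : ℝ, HasDerivAt (fun z => deriv u z ^ 2 / 2)
      (deriv (deriv u) z * deriv u z) z := by
    intro z
    have h1 : HasDerivAt (deriv u) (deriv (deriv u) z) z := (hud' z).hasDerivAt
    have h := (h1.mul h1).div_const 2
    rw [show (deriv (deriv u) z * deriv u z + deriv u z * deriv (deriv u) z) / 2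
        = deriv (deriv u) z * deriv u z by ring] at h
    exact HasDerivAt.congr_of_eventuallyEq h (Eventually.of_forall fun w => by simp only [Pi.mul_apply]; ring)
  have hAeq : ∀ R : ℝ, (∫ z in (-R)..R, deriv (deriv u) z * deriv u z)
      = deriv u R ^ 2 / 2 - deriv u (-R) ^ 2 / 2 :=
    fun R => intervalIntegral.integral_eq_sub_of_hasDerivAt (fun z _ => hGd z)
      ((hu''c.mul hu'c).intervalIntegrable _ _)
  have hA : Tendsto (fun R : ℝ => ∫ z in (-R)..R, deriv (deriv u) z * deriv u z)
      atTop (nhds 0) := by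
    have h1 : Tendsto (fun R : ℝ => deriv u R ^ 2 / 2) atTop (nhds 0) := by
      have := (h'top.mul h'top).div_const 2
      rw [mul_zero, zero_div] at this
      exact Tendsto.congr (fun R => by ring) this
    have h2 : Tendsto (fun R : ℝ => deriv u (-R) ^ 2 / 2) atTop (nhds 0) := by
      have h3 := h'bot.comp tendsto_neg_atTop_atBot
      have := (h3.mul h3).div_const 2
      rw [mul_zero, zero_div] at this
      exact Tendsto.congr (fun R => by simp [Function.comp]; ring) this
    have := h1.sub h2
    rw [sub_zero] at this
    exact Tendsto.congr (fun R => (hAeq R).symm) this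
  -- potential term
  set F : ℝ → ℝ := fun y => ∫ s in (0:ℝ)..y, f s with hF_def
  have hFd : ∀ y : ℝ, HasDerivAt F (f y) y :=
    fun y => (hfc.integral_hasStrictDerivAt 0 y).hasDerivAt
  have hFc : Continuous F := Differentiable.continuous (fun y => (hFd y).differentiableAt)
  have hCd : ∀ z : ℝ, HasDerivAt (fun z => F (u z)) (f (u z) * deriv u z) z :=
    fun z => (hFd (u z)).comp z (hud z).hasDerivAt
  have hCeq : ∀ R : ℝ, (∫ z in (-R)..R, f (u z) * deriv u z) = F (u R) - F (u (-R)) :=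
    fun R => intervalIntegral.integral_eq_sub_of_hasDerivAt (fun z _ => hCd z)
      (((hfc.comp huc).mul hu'c).intervalIntegrable _ _)
  have hF1 : F 1 = 0 := hfi
  have hF0 : F 0 = 0 := intervalIntegral.integral_same
  have hC : Tendsto (fun R : ℝ => ∫ z in (-R)..R, f (u z) * deriv u z) atTop (nhds 0) := by
    have h1 : Tendsto (fun R : ℝ => F (u R)) atTop (nhds 0) := by
      have := (hFc.tendsto 1).comp hutop
      rwa [hF1] at this
    have h2 : Tendsto (fun R : ℝ => F (u (-R))) atTop (nhds 0) := by
      have := ((hFc.tendsto 0).comp hubot).comp tendsto_neg_atTop_atBot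
      rwa [hF0] at this
    have := h1.sub h2
    rw [sub_zero] at this
    exact Tendsto.congr (fun R => (hCeq R).symm) this
  -- pointwise multiplied equation
  have hptw : ∀ z : ℝ, deriv (deriv u) z * deriv u z - ε * (deltaOp a u z * deriv u z)
      + f (u z) * deriv u z = -b * (deriv u₀ z * deriv u z) := by
    intro z
    have h := heq z
    linear_combination (deriv u z) * h
  -- integral identity
  have hIint : ∀ R : ℝ, (∫ z in (-R)..R, deriv (deriv u) z * deriv u z)
      - ε * (∫ z in (-R)..R, deltaOp a u z * deriv u z)
      + (∫ z in (-R)..R, f (u z) * deriv u z)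
      = -b * ∫ z in (-R)..R, deriv u₀ z * deriv u z := by
    intro R
    have i1 : IntervalIntegrable (fun z => deriv (deriv u) z * deriv u z) volume (-R) R :=
      (hu''c.mul hu'c).intervalIntegrable _ _
    have i2 : IntervalIntegrable (fun z => deltaOp a u z * deriv u z) volume (-R) R :=
      (hΔc.mul hu'c).intervalIntegrable _ _
    have i2' : IntervalIntegrable (fun z => ε * (deltaOp a u z * deriv u z)) volume (-R) R :=
      i2.const_mul ε
    have i3 : IntervalIntegrable (fun z => f (u z) * deriv u z) volume (-R) R :=
      ((hfc.comp huc).mul hu'c).intervalIntegrable _ _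
    calc (∫ z in (-R)..R, deriv (deriv u) z * deriv u z)
        - ε * (∫ z in (-R)..R, deltaOp a u z * deriv u z)
        + (∫ z in (-R)..R, f (u z) * deriv u z)
        = ∫ z in (-R)..R, (deriv (deriv u) z * deriv u z
            - ε * (deltaOp a u z * deriv u z) + f (u z) * deriv u z) := by
          rw [intervalIntegral.integral_add (i1.sub i2') i3,
            intervalIntegral.integral_sub i1 i2',
            intervalIntegral.integral_const_mul]
      _ = ∫ z in (-R)..R, -b * (deriv u₀ z * deriv u z) := by
          apply intervalIntegral.integral_congr
          intro z _
          exact hptw z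
      _ = -b * ∫ z in (-R)..R, deriv u₀ z * deriv u z :=
          intervalIntegral.integral_const_mul _ _
  -- limit of the left-hand side
  have hLHS : Tendsto (fun R : ℝ => -b * ∫ z in (-R)..R, deriv u₀ z * deriv u z)
      atTop (nhds 0) := by
    have := (hA.sub (hB.const_mul ε)).add hC
    rw [mul_zero, sub_zero, add_zero] at this
    exact Tendsto.congr (fun R => hIint R) this
  -- conclude
  by_cases hI : Integrable (fun z => deriv u₀ z * deriv u z) volume
  · have hD : Tendsto (fun R : ℝ => ∫ z in (-R)..R, deriv u₀ z * deriv u z)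
        atTop (nhds (∫ z : ℝ, deriv u₀ z * deriv u z)) :=
      intervalIntegral_tendsto_integral hI tendsto_neg_atTop_atBot tendsto_id
    have h2 : Tendsto (fun R : ℝ => -b * ∫ z in (-R)..R, deriv u₀ z * deriv u z)
        atTop (nhds (-b * ∫ z : ℝ, deriv u₀ z * deriv u z)) := hD.const_mul (-b)
    have h3 := tendsto_nhds_unique h2 hLHS
    linarith
  · rw [integral_undef hI, mul_zero]
end

section
/- Let u₁ ∈ H²(ℝ) with ∫_ℝ u₁·u₀' dz = 0 satisfy u₁'' + f'(u₀)·u₁ = Δu₀ on ℝ, and set u_ap = u₀ + ε·u₁. Then there exist constants C > 0 and ε₀ > 0, independent of ε, such that for all ε ∈ (0, ε₀] the residual G(ε) := -(u_ap'' - ε·Δu_ap + f(u_ap)) satisfies ‖G(ε)‖_{L²(ℝ)} ≤ C·ε². -/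
open MeasureTheory Filter Real

/-- A continuous real function with finite limits at `±∞` is bounded. -/
lemma bdd_of_tendsto {u : ℝ → ℝ} (hc : Continuous u) {l₁ l₂ : ℝ}
    (hb : Tendsto u atBot (nhds l₁)) (ht : Tendsto u atTop (nhds l₂)) :
    ∃ M : ℝ, 0 ≤ M ∧ ∀ z, |u z| ≤ M := by
  have h1 : ∀ᶠ z in atTop, dist (u z) l₂ < 1 := ht (Metric.ball_mem_nhds l₂ one_pos)
  have h2 : ∀ᶠ z in atBot, dist (u z) l₁ < 1 := hb (Metric.ball_mem_nhds l₁ one_pos)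
  obtain ⟨b, hbb⟩ := eventually_atTop.mp h1
  obtain ⟨a, haa⟩ := eventually_atBot.mp h2
  obtain ⟨C, hC⟩ := isCompact_Icc.exists_bound_of_continuousOn (s := Set.Icc a b) hc.continuousOn
  refine ⟨max (max (max (|l₁| + 1) (|l₂| + 1)) (max C 0)) 0, le_max_right _ _, fun z => ?_⟩
  rcases le_total z a with hz | hz
  · have := haa z hz
    have : |u z| ≤ |l₁| + 1 := by
      have := abs_sub_abs_le_abs_sub (u z) l₁
      rw [Real.dist_eq] at *
      linarith
    calc |u z| ≤ |l₁| + 1 := this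
      _ ≤ _ := by
        refine le_max_of_le_left (le_max_of_le_left (le_max_left _ _))
  · rcases le_total b z with hz' | hz'
    · have := hbb z hz'
      have : |u z| ≤ |l₂| + 1 := by
        have := abs_sub_abs_le_abs_sub (u z) l₂
        rw [Real.dist_eq] at *
        linarith
      exact le_trans this (le_max_of_le_left (le_max_of_le_left (le_max_right _ _)))
    · have := hC z ⟨hz, hz'⟩
      exact le_trans this (le_max_of_le_left (le_max_of_le_right (le_max_left _ _)))

/-- Cauchy–Schwarz for `ℝ≥0∞`-valued sums over `ℤ`. -/
lemma tsum_cs (c v : ℤ → ENNReal) :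
    (∑' k, c k * v k) ^ (2:ℝ) ≤ (∑' k, c k) * ∑' k, c k * v k ^ (2:ℝ) := by
  have hmeas : ∀ g : ℤ → ENNReal, Measurable g := fun g => measurable_of_countable g
  have h := ENNReal.lintegral_mul_le_Lp_mul_Lq (Measure.count : Measure ℤ)
    (Real.HolderConjugate.two_two)
    (f := fun k => c k ^ (1/2:ℝ)) (g := fun k => c k ^ (1/2:ℝ) * v k)
    (hmeas _).aemeasurable (hmeas _).aemeasurable
  simp only [Pi.mul_apply, lintegral_count] at h
  have e1 : ∀ k, c k ^ (1/2:ℝ) * (c k ^ (1/2:ℝ) * v k) = c k * v k := by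
    intro k
    rw [← mul_assoc, ← ENNReal.rpow_add_of_nonneg _ _ (by norm_num) (by norm_num)]
    norm_num
  have e2 : ∀ k, (c k ^ (1/2:ℝ)) ^ (2:ℝ) = c k := by
    intro k
    rw [← ENNReal.rpow_mul]
    norm_num
  have e3 : ∀ k, (c k ^ (1/2:ℝ) * v k) ^ (2:ℝ) = c k * v k ^ (2:ℝ) := by
    intro k
    rw [ENNReal.mul_rpow_of_nonneg _ _ (by norm_num), e2]
  simp only [e1, e2, e3] at h
  calc (∑' k, c k * v k) ^ (2:ℝ)
      ≤ ((∑' k, c k) ^ (1/(2:ℝ)) * (∑' k, c k * v k ^ (2:ℝ)) ^ (1/(2:ℝ))) ^ (2:ℝ) :=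
        ENNReal.rpow_le_rpow h (by norm_num)
    _ = (∑' k, c k) * ∑' k, c k * v k ^ (2:ℝ) := by
        rw [ENNReal.mul_rpow_of_nonneg _ _ (by norm_num), ← ENNReal.rpow_mul, ← ENNReal.rpow_mul]
        norm_num

/-- A function in `H²(ℝ)` (in fact `H¹`) is bounded. -/
lemma bdd_of_H2 {u : ℝ → ℝ} (hu : MemH2R u) : ∃ B : ℝ, 0 ≤ B ∧ ∀ z, |u z| ≤ B := by
  have hc : Continuous u := hu.1.continuous
  have hc' : Continuous (deriv u) := hu.2.1.continuous
  have h1 : Integrable (fun z => u z ^ 2) volume := hu.2.2.1.integrable_sq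
  have h2 : Integrable (fun z => deriv u z ^ 2) volume := hu.2.2.2.1.integrable_sq
  have hprod : Integrable (fun z => 2 * (u z * deriv u z)) volume := by
    refine ((h1.add h2).const_mul 2).mono'
      ((continuous_const.mul (hc.mul hc')).aestronglyMeasurable) (ae_of_all _ fun z => ?_)
    have h3 := sq_nonneg (|u z| - |deriv u z|)
    have h4 : ‖2 * (u z * deriv u z)‖ = 2 * (|u z| * |deriv u z|) := by
      rw [norm_mul, norm_mul]; simp [Real.norm_eq_abs, abs_mul]
    rw [h4]
    simp only [Pi.add_apply]
    nlinarith [sq_abs (u z), sq_abs (deriv u z)]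
  set K : ℝ := u 0 ^ 2 + ∫ z, ‖2 * (u z * deriv u z)‖ with hK
  have hderiv : ∀ t : ℝ, HasDerivAt (fun y => u y ^ 2) (2 * (u t * deriv u t)) t := by
    intro t
    have h : HasDerivAt (fun y => u y ^ 2) (((2:ℕ):ℝ) * u t ^ (2 - 1) * deriv u t) t :=
      ((hu.1 t).hasDerivAt).pow 2
    convert h using 1
    ring
  have key : ∀ x : ℝ, u x ^ 2 ≤ K := by
    intro x
    have hFT := intervalIntegral.integral_eq_sub_of_hasDerivAt
      (a := (0:ℝ)) (b := x) (f := fun y => u y ^ 2) (f' := fun t => 2 * (u t * deriv u t))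
      (fun t _ => hderiv t) hprod.intervalIntegrable
    have habs : ‖∫ t in (0:ℝ)..x, 2 * (u t * deriv u t)‖ ≤ ∫ z, ‖2 * (u z * deriv u z)‖ := by
      calc ‖∫ t in (0:ℝ)..x, 2 * (u t * deriv u t)‖
          ≤ ∫ t in Set.uIoc (0:ℝ) x, ‖2 * (u t * deriv u t)‖ :=
            intervalIntegral.norm_integral_le_integral_norm_uIoc
        _ ≤ ∫ z, ‖2 * (u z * deriv u z)‖ :=
            setIntegral_le_integral hprod.norm (ae_of_all _ fun z => norm_nonneg _)
    have : u x ^ 2 = u 0 ^ 2 + ∫ t in (0:ℝ)..x, 2 * (u t * deriv u t) := by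
      rw [hFT]; ring
    rw [this, hK]
    rw [Real.norm_eq_abs] at habs
    have := abs_le.mp habs
    linarith [this.2]
  exact ⟨Real.sqrt K, Real.sqrt_nonneg K, fun z => abs_le_sqrt (key z)⟩

/-- The nonlocal operator maps bounded continuous `L²` functions to `L²`. -/
lemma deltaOp_eLpNorm_lt_top {a : ℤ → ℝ} (ha : Summable fun k => |a k|) {u : ℝ → ℝ}
    (hc : Continuous u) {B : ℝ} (hB : ∀ z, |u z| ≤ B) (hu : MemLp u 2 volume) :
    eLpNorm (deltaOp a u) 2 volume < ⊤ := by
  set c : ℤ → ENNReal := fun k => ENNReal.ofReal |a k| with hcdef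
  have hA : (∑' k, c k) = ENNReal.ofReal (∑' k, |a k|) :=
    (ENNReal.ofReal_tsum_of_nonneg (fun k => abs_nonneg _) ha).symm
  have hAtop : (∑' k, c k) ≠ ⊤ := by rw [hA]; exact ENNReal.ofReal_ne_top
  have hI : (∫⁻ z, (‖u z‖₊ : ENNReal) ^ (2:ℝ)) < ⊤ := by
    have h := lintegral_rpow_enorm_lt_top_of_eLpNorm_lt_top
      (p := 2) (f := u) (μ := volume) (by norm_num) (by norm_num) hu.2
    simpa [enorm_eq_nnnorm] using h
  have hsumn : ∀ z : ℝ, Summable fun k : ℤ => ‖a k * u (z - (k:ℝ))‖ := by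
    intro z
    refine Summable.of_nonneg_of_le (fun k => norm_nonneg _) (fun k => ?_) (ha.mul_right B)
    rw [norm_mul, Real.norm_eq_abs, Real.norm_eq_abs]
    exact mul_le_mul_of_nonneg_left (hB _) (abs_nonneg _)
  have hpt : ∀ z : ℝ, (‖deltaOp a u z‖₊ : ENNReal)
      ≤ ∑' k : ℤ, c k * (‖u (z - (k:ℝ))‖₊ : ENNReal) := by
    intro z
    rw [← enorm_eq_nnnorm, Real.enorm_eq_ofReal_abs]
    calc ENNReal.ofReal |deltaOp a u z|
        ≤ ENNReal.ofReal (∑' k : ℤ, ‖a k * u (z - (k:ℝ))‖) := by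
          refine ENNReal.ofReal_le_ofReal ?_
          simpa [Real.norm_eq_abs, deltaOp] using norm_tsum_le_tsum_norm (hsumn z)
      _ = ∑' k : ℤ, ENNReal.ofReal ‖a k * u (z - (k:ℝ))‖ :=
          ENNReal.ofReal_tsum_of_nonneg (fun k => norm_nonneg _) (hsumn z)
      _ = ∑' k : ℤ, c k * (‖u (z - (k:ℝ))‖₊ : ENNReal) := by
          refine tsum_congr fun k => ?_
          rw [norm_mul, Real.norm_eq_abs, Real.norm_eq_abs,
            ENNReal.ofReal_mul (abs_nonneg _), hcdef, ← enorm_eq_nnnorm, Real.enorm_eq_ofReal_abs]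
  have hcm : ∀ k : ℤ, Continuous fun z : ℝ => u (z - (k:ℝ)) :=
    fun k => hc.comp (continuous_sub_right _)
  have hmw : ∀ k : ℤ, Measurable fun z : ℝ => (‖u (z - (k:ℝ))‖₊ : ENNReal) ^ (2:ℝ) :=
    fun k => ((hcm k).measurable.nnnorm.coe_nnreal_ennreal).pow_const (2:ℝ)
  have hmeasv : ∀ k : ℤ, Measurable fun z : ℝ => c k * (‖u (z - (k:ℝ))‖₊ : ENNReal) ^ (2:ℝ) :=
    fun k => measurable_const.mul (hmw k)
  have htrans : ∀ k : ℤ, (∫⁻ z, (‖u (z - (k:ℝ))‖₊ : ENNReal) ^ (2:ℝ))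
      = ∫⁻ z, (‖u z‖₊ : ENNReal) ^ (2:ℝ) := by
    intro k
    have := lintegral_add_right_eq_self (μ := volume)
      (fun x => (‖u x‖₊ : ENNReal) ^ (2:ℝ)) (-(k:ℝ))
    simpa [sub_eq_add_neg] using this
  have hmain : (∫⁻ z, (‖deltaOp a u z‖₊ : ENNReal) ^ (2:ℝ))
      ≤ (∑' k, c k) * ((∑' k, c k) * ∫⁻ z, (‖u z‖₊ : ENNReal) ^ (2:ℝ)) := by
    calc ∫⁻ z, (‖deltaOp a u z‖₊ : ENNReal) ^ (2:ℝ)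
        ≤ ∫⁻ z, (∑' k : ℤ, c k * (‖u (z - (k:ℝ))‖₊ : ENNReal)) ^ (2:ℝ) :=
          lintegral_mono fun z => ENNReal.rpow_le_rpow (hpt z) (by norm_num)
      _ ≤ ∫⁻ z, (∑' k, c k) * ∑' k : ℤ, c k * (‖u (z - (k:ℝ))‖₊ : ENNReal) ^ (2:ℝ) :=
          lintegral_mono fun z => tsum_cs c _
      _ = (∑' k, c k) * ∫⁻ z, ∑' k : ℤ, c k * (‖u (z - (k:ℝ))‖₊ : ENNReal) ^ (2:ℝ) :=
          lintegral_const_mul _ (Measurable.ennreal_tsum hmeasv)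
      _ = (∑' k, c k) * ∑' k : ℤ, ∫⁻ z, c k * (‖u (z - (k:ℝ))‖₊ : ENNReal) ^ (2:ℝ) := by
          rw [lintegral_tsum fun k => (hmeasv k).aemeasurable]
      _ = (∑' k, c k) * ∑' k : ℤ, c k * ∫⁻ z, (‖u (z - (k:ℝ))‖₊ : ENNReal) ^ (2:ℝ) := by
          congr 1
          refine tsum_congr fun k => ?_
          rw [lintegral_const_mul _ (hmw k)]
      _ = (∑' k, c k) * ∑' k : ℤ, c k * ∫⁻ z, (‖u z‖₊ : ENNReal) ^ (2:ℝ) := by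
          congr 1
          exact tsum_congr fun k => by rw [htrans k]
      _ = (∑' k, c k) * ((∑' k, c k) * ∫⁻ z, (‖u z‖₊ : ENNReal) ^ (2:ℝ)) := by
          rw [ENNReal.tsum_mul_right]
  rw [eLpNorm_eq_lintegral_rpow_enorm_toReal (by norm_num) (by norm_num)]
  refine ENNReal.rpow_lt_top_of_nonneg (by norm_num) ?_
  refine (lt_of_le_of_lt (le_trans (le_of_eq ?_) hmain) ?_).ne
  · simp [enorm_eq_nnnorm]
  · exact ENNReal.mul_lt_top hAtop.lt_top (ENNReal.mul_lt_top hAtop.lt_top hI)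

/-- The refined approximation `u_ap = u₀ + ε u₁`, with `u₁` solving
`u₁'' + f'(u₀) u₁ = Δu₀`, has residual `G(ε)` of order `ε²` in `L²(ℝ)`. -/
theorem stmt_13 (a : ℤ → ℝ) (f u₀ : ℝ → ℝ)
    (ha : CoeffH2 a) (hf : NonlinH1 f) (hu₀ : IsHeteroclinic f u₀)
    (u₁ : ℝ → ℝ) (hu₁ : MemH2R u₁) (horth : (∫ z : ℝ, u₁ z * deriv u₀ z) = 0)
    (hequ₁ : ∀ z : ℝ, deriv (deriv u₁) z + deriv f (u₀ z) * u₁ z = deltaOp a u₀ z) :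
    ∃ C > (0:ℝ), ∃ ε₀ > (0:ℝ), ∀ ε : ℝ, 0 < ε → ε ≤ ε₀ →
      L2norm (fun z => -(deriv (deriv (fun y => u₀ y + ε * u₁ y)) z
          - ε * deltaOp a (fun y => u₀ y + ε * u₁ y) z + f (u₀ z + ε * u₁ z)))
        ≤ C * ε ^ 2 := by
  -- regularity of f
  have hf2 : ContDiff ℝ (1+1) f := by norm_num; exact hf.1
  obtain ⟨hfd, -, hf1'⟩ := contDiff_succ_iff_deriv.mp hf2
  have hfd' : Differentiable ℝ (deriv f) := hf1'.differentiable one_ne_zero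
  have hfc : Continuous f := hfd.continuous
  have hfc' : Continuous (deriv f) := hfd'.continuous
  have hfc'' : Continuous (deriv (deriv f)) := hf1'.continuous_deriv le_rfl
  -- regularity of u₀
  have hu02 : ContDiff ℝ (1+1) u₀ := by norm_num; exact hu₀.1
  obtain ⟨hu0d, -, hu01'⟩ := contDiff_succ_iff_deriv.mp hu02
  have hu0d' : Differentiable ℝ (deriv u₀) := hu01'.differentiable one_ne_zero
  have hu0c : Continuous u₀ := hu0d.continuous
  have hu1c : Continuous u₁ := hu₁.1.continuous
  -- bounds
  obtain ⟨M₀, hM₀0, hM₀⟩ := bdd_of_tendsto hu0c hu₀.2.2.1 hu₀.2.2.2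
  obtain ⟨B, hB0, hB⟩ := bdd_of_H2 hu₁
  set R : ℝ := M₀ + B with hR
  have hR0 : 0 ≤ R := by positivity
  obtain ⟨M', hM'⟩ := (isCompact_Icc (a := -R) (b := R)).exists_bound_of_continuousOn
    hfc''.continuousOn
  set M : ℝ := max M' 0 with hMdef
  have hM0 : 0 ≤ M := le_max_right _ _
  have hM : ∀ x ∈ Set.Icc (-R) R, ‖deriv (deriv f) x‖ ≤ M :=
    fun x hx => le_trans (hM' x hx) (le_max_left _ _)
  -- Taylor-type estimate
  have hlip : ∀ s ∈ Set.Icc (-R) R, ∀ t ∈ Set.Icc (-R) R,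
      |deriv f t - deriv f s| ≤ M * |t - s| := by
    intro s hs t ht
    have := Convex.norm_image_sub_le_of_norm_deriv_le (f := deriv f)
      (fun y _ => hfd' y) hM (convex_Icc _ _) hs ht
    simpa [Real.norm_eq_abs] using this
  have htaylor : ∀ x h : ℝ, x ∈ Set.Icc (-R) R → x + h ∈ Set.Icc (-R) R →
      |f (x + h) - f x - deriv f x * h| ≤ M * h ^ 2 := by
    intro x h hx hxh
    have hsub : Set.uIcc x (x + h) ⊆ Set.Icc (-R) R := Set.uIcc_subset_Icc hx hxh
    set ψ : ℝ → ℝ := fun t => f t - deriv f x * t with hψ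
    have hψd : ∀ t, DifferentiableAt ℝ ψ t := fun t =>
      (hfd t).sub ((differentiable_id.const_mul (deriv f x)) t)
    have hψ' : ∀ t, deriv ψ t = deriv f t - deriv f x := by
      intro t
      have h1 : HasDerivAt (fun y : ℝ => deriv f x * y) (deriv f x) t := by
        simpa using (hasDerivAt_id t).const_mul (deriv f x)
      exact (((hfd t).hasDerivAt).sub h1).deriv
    have hbound : ∀ t ∈ Set.uIcc x (x + h), ‖deriv ψ t‖ ≤ M * |h| := by
      intro t htm
      rw [hψ' t, Real.norm_eq_abs]
      have h1 := hlip x hx t (hsub htm)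
      have h2 : |t - x| ≤ |h| := by
        have := Real.dist_left_le_of_mem_uIcc htm
        rw [Real.dist_eq, Real.dist_eq] at this
        rw [abs_sub_comm]
        simpa using this
      exact le_trans h1 (mul_le_mul_of_nonneg_left h2 hM0)
    have hmvt := Convex.norm_image_sub_le_of_norm_deriv_le (f := ψ)
      (fun t _ => hψd t) hbound (convex_uIcc _ _)
      (Set.left_mem_uIcc) (Set.right_mem_uIcc)
    have e : ψ (x + h) - ψ x = f (x + h) - f x - deriv f x * h := by rw [hψ]; ring
    rw [e] at hmvt
    have e2 : M * |h| * ‖x + h - x‖ = M * h ^ 2 := by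
      rw [Real.norm_eq_abs]
      have : |x + h - x| = |h| := by ring_nf
      rw [this]
      rw [mul_assoc, ← abs_mul]
      rw [abs_of_nonneg (mul_self_nonneg h)]
      ring
    rw [e2] at hmvt
    simpa [Real.norm_eq_abs] using hmvt
  -- summability
  have hsumn : ∀ (u : ℝ → ℝ) (Bu : ℝ), (∀ z, |u z| ≤ Bu) →
      ∀ z : ℝ, Summable fun k : ℤ => ‖a k * u (z - (k:ℝ))‖ := by
    intro u Bu hBu z
    refine Summable.of_nonneg_of_le (fun k => norm_nonneg _) (fun k => ?_) (ha.1.mul_right Bu)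
    rw [norm_mul, Real.norm_eq_abs, Real.norm_eq_abs]
    exact mul_le_mul_of_nonneg_left (hBu _) (abs_nonneg _)
  -- continuity of Δu₁
  have hΔu1c : Continuous (deltaOp a u₁) := by
    refine continuous_tsum (fun k => continuous_const.mul (hu1c.comp (continuous_sub_right _)))
      (ha.1.mul_right B) (fun k z => ?_)
    rw [norm_mul, Real.norm_eq_abs, Real.norm_eq_abs]
    exact mul_le_mul_of_nonneg_left (hB _) (abs_nonneg _)
  -- Δu₁ ∈ L²
  have hD : eLpNorm (deltaOp a u₁) 2 volume < ⊤ :=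
    deltaOp_eLpNorm_lt_top ha.1 hu1c hB hu₁.2.2.1
  -- the constant
  set K : ENNReal := ENNReal.ofReal (M * B) * eLpNorm u₁ 2 volume
      + eLpNorm (deltaOp a u₁) 2 volume with hKdef
  have hKtop : K ≠ ⊤ := by
    rw [hKdef]
    exact ENNReal.add_ne_top.mpr
      ⟨ENNReal.mul_ne_top ENNReal.ofReal_ne_top hu₁.2.2.1.2.ne, hD.ne⟩
  have hKnn : (0:ℝ) ≤ K.toReal := ENNReal.toReal_nonneg
  refine ⟨K.toReal + 1, by linarith, 1, one_pos, fun ε hε hε1 => ?_⟩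
  -- pointwise rewriting of the residual
  have hsplit : ∀ z, deltaOp a (fun y => u₀ y + ε * u₁ y) z
      = deltaOp a u₀ z + ε * deltaOp a u₁ z := by
    intro z
    have h0 : Summable fun k : ℤ => a k * u₀ (z - (k:ℝ)) := (hsumn u₀ M₀ hM₀ z).of_norm
    have h1 : Summable fun k : ℤ => a k * u₁ (z - (k:ℝ)) := (hsumn u₁ B hB z).of_norm
    unfold deltaOp
    calc ∑' k : ℤ, a k * (u₀ (z - (k:ℝ)) + ε * u₁ (z - (k:ℝ)))
        = ∑' k : ℤ, (a k * u₀ (z - (k:ℝ)) + ε * (a k * u₁ (z - (k:ℝ)))) := by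
          refine tsum_congr fun k => ?_; ring
      _ = (∑' k : ℤ, a k * u₀ (z - (k:ℝ))) + ∑' k : ℤ, ε * (a k * u₁ (z - (k:ℝ))) :=
          Summable.tsum_add h0 (h1.mul_left ε)
      _ = _ := by rw [tsum_mul_left]
  have hdap : ∀ z, deriv (deriv (fun y => u₀ y + ε * u₁ y)) z
      = deriv (deriv u₀) z + ε * deriv (deriv u₁) z := by
    have e1 : deriv (fun y => u₀ y + ε * u₁ y) = fun y => deriv u₀ y + ε * deriv u₁ y := by
      funext y
      rw [deriv_fun_add (hu0d y) ((hu₁.1 y).const_mul ε), deriv_const_mul ε (hu₁.1 y)]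
    intro z
    rw [e1, deriv_fun_add (hu0d' z) ((hu₁.2.1 z).const_mul ε), deriv_const_mul ε (hu₁.2.1 z)]
  have hpt : (fun z => -(deriv (deriv (fun y => u₀ y + ε * u₁ y)) z
        - ε * deltaOp a (fun y => u₀ y + ε * u₁ y) z + f (u₀ z + ε * u₁ z)))
      = fun z => (f (u₀ z) + ε * (deriv f (u₀ z) * u₁ z) - f (u₀ z + ε * u₁ z))
          + ε ^ 2 * deltaOp a u₁ z := by
    funext z
    rw [hdap z, hsplit z]
    have e1 := hu₀.2.1 z
    have e2 := hequ₁ z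
    linear_combination (-1) * e1 + (-ε) * e2
  -- remainder bound
  have hRb : ∀ z, ‖f (u₀ z) + ε * (deriv f (u₀ z) * u₁ z) - f (u₀ z + ε * u₁ z)‖
      ≤ ‖(M * B * ε ^ 2) * u₁ z‖ := by
    intro z
    have h1 := abs_le.mp (hM₀ z)
    have h2 := abs_le.mp (hB z)
    have hx : u₀ z ∈ Set.Icc (-R) R := ⟨by rw [hR]; linarith, by rw [hR]; linarith⟩
    have heps : |ε * u₁ z| ≤ B := by
      rw [abs_mul, abs_of_pos hε]
      calc ε * |u₁ z| ≤ 1 * B := mul_le_mul hε1 (hB z) (abs_nonneg _) zero_le_one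
        _ = B := one_mul B
    have h3 := abs_le.mp heps
    have hxh : u₀ z + ε * u₁ z ∈ Set.Icc (-R) R :=
      ⟨by rw [hR]; linarith, by rw [hR]; linarith⟩
    have ht := htaylor (u₀ z) (ε * u₁ z) hx hxh
    have e : f (u₀ z) + ε * (deriv f (u₀ z) * u₁ z) - f (u₀ z + ε * u₁ z)
        = -(f (u₀ z + ε * u₁ z) - f (u₀ z) - deriv f (u₀ z) * (ε * u₁ z)) := by ring
    rw [Real.norm_eq_abs, Real.norm_eq_abs, e, abs_neg, abs_mul,
      abs_of_nonneg (by positivity : (0:ℝ) ≤ M * B * ε ^ 2)]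
    refine le_trans ht ?_
    have h4 : (ε * u₁ z) ^ 2 = ε ^ 2 * (u₁ z * u₁ z) := by ring
    have h5 : u₁ z * u₁ z = |u₁ z| * |u₁ z| := (abs_mul_abs_self _).symm
    rw [h4, h5]
    have h6 : |u₁ z| * |u₁ z| ≤ B * |u₁ z| :=
      mul_le_mul_of_nonneg_right (hB z) (abs_nonneg _)
    calc M * (ε ^ 2 * (|u₁ z| * |u₁ z|)) ≤ M * (ε ^ 2 * (B * |u₁ z|)) := by
          refine mul_le_mul_of_nonneg_left ?_ hM0
          exact mul_le_mul_of_nonneg_left h6 (sq_nonneg ε)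
      _ = M * B * ε ^ 2 * |u₁ z| := by ring
  -- continuity of the remainder
  have hRc : Continuous (fun z => f (u₀ z) + ε * (deriv f (u₀ z) * u₁ z)
      - f (u₀ z + ε * u₁ z)) :=
    ((hfc.comp hu0c).add (continuous_const.mul ((hfc'.comp hu0c).mul hu1c))).sub
      (hfc.comp (hu0c.add (continuous_const.mul hu1c)))
  -- the L² estimate
  have hL : eLpNorm (fun z => (f (u₀ z) + ε * (deriv f (u₀ z) * u₁ z) - f (u₀ z + ε * u₁ z))
        + ε ^ 2 * deltaOp a u₁ z) 2 volume ≤ ENNReal.ofReal (ε ^ 2) * K := by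
    have hadd := eLpNorm_add_le (μ := volume) (p := 2)
      (f := fun z => f (u₀ z) + ε * (deriv f (u₀ z) * u₁ z) - f (u₀ z + ε * u₁ z))
      (g := fun z => ε ^ 2 * deltaOp a u₁ z)
      hRc.aestronglyMeasurable (continuous_const.mul hΔu1c).aestronglyMeasurable one_le_two
    have h1 : eLpNorm (fun z => f (u₀ z) + ε * (deriv f (u₀ z) * u₁ z)
        - f (u₀ z + ε * u₁ z)) 2 volume
        ≤ ENNReal.ofReal (M * B * ε ^ 2) * eLpNorm u₁ 2 volume := by
      refine le_trans (eLpNorm_mono hRb) ?_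
      have := eLpNorm_const_smul (M * B * ε ^ 2 : ℝ) u₁ (2 : ENNReal) volume
      have e : (fun z => (M * B * ε ^ 2) * u₁ z) = (M * B * ε ^ 2) • u₁ := rfl
      rw [e, this, Real.enorm_eq_ofReal_abs, abs_of_nonneg (by positivity : (0:ℝ) ≤ M * B * ε ^ 2)]
    have h2 : eLpNorm (fun z => ε ^ 2 * deltaOp a u₁ z) 2 volume
        = ENNReal.ofReal (ε ^ 2) * eLpNorm (deltaOp a u₁) 2 volume := by
      have := eLpNorm_const_smul (ε ^ 2 : ℝ) (deltaOp a u₁) (2 : ENNReal) volume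
      have e : (fun z => (ε ^ 2) * deltaOp a u₁ z) = (ε ^ 2) • deltaOp a u₁ := rfl
      rw [e, this, Real.enorm_eq_ofReal_abs, abs_of_nonneg (sq_nonneg ε)]
    calc eLpNorm _ 2 volume ≤ _ := hadd
      _ ≤ ENNReal.ofReal (M * B * ε ^ 2) * eLpNorm u₁ 2 volume
          + ENNReal.ofReal (ε ^ 2) * eLpNorm (deltaOp a u₁) 2 volume := by
          rw [← h2]; exact add_le_add h1 le_rfl
      _ = ENNReal.ofReal (ε ^ 2) * K := by
          rw [hKdef, mul_add, show (M * B * ε ^ 2 : ℝ) = ε ^ 2 * (M * B) by ring,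
            ENNReal.ofReal_mul (sq_nonneg ε), mul_assoc]
  -- conclusion
  have hfin : ENNReal.ofReal (ε ^ 2) * K ≠ ⊤ := ENNReal.mul_ne_top ENNReal.ofReal_ne_top hKtop
  have hle : L2norm (fun z => -(deriv (deriv (fun y => u₀ y + ε * u₁ y)) z
      - ε * deltaOp a (fun y => u₀ y + ε * u₁ y) z + f (u₀ z + ε * u₁ z)))
      ≤ (ENNReal.ofReal (ε ^ 2) * K).toReal := by
    rw [L2norm, hpt]
    exact ENNReal.toReal_mono hfin hL
  refine le_trans hle ?_
  rw [ENNReal.toReal_mul, ENNReal.toReal_ofReal (sq_nonneg ε)]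
  nlinarith [sq_nonneg ε]
end
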